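/- arXiv:1203.0919 — 14 statements merged into one kernel-verified Lean document; each statement's English description precedes it below -/
import Mathlib

section
/- Let D be a finite nonempty set, Ω a nonempty set, and L : D × Ω → ℝ a loss function such that each gamble f_d = −L(d,·) is bounded. Then for every ε > 0 there exist a finite partition 𝒜 of Ω into nonempty sets with |𝒜| ≤ (1 + 1/ε)^{|D|}, and a function L̂ : D × 𝒜 → ℝ, such that L ∼_ε L̂, i.e., for every d ∈ D, every A ∈ 𝒜, and every w ∈ A, |f_d(w) − f̂_d(A)| ≤ (sup f_d − inf f_d)·ε, where f̂_d(A) = −L̂(d,A). -/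
/-- For a finite decision set `D` and a loss function `L : D × Ω → ℝ` with bounded
gambles `f_d = -L(d,·)`, for every `ε > 0` there is a finite partition `𝒜` of `Ω`
into nonempty sets with `|𝒜| ≤ (1 + 1/ε)^|D|` and an approximate loss
`L̂ : D × 𝒜 → ℝ` with `L ∼_ε L̂`. -/
theorem stmt_2 {D : Type*} [Fintype D] [Nonempty D] {Ω : Type*} [Nonempty Ω]
    (L : D × Ω → ℝ)
    (hbdd : ∀ d : D, BddAbove (Set.range fun w => -L (d, w)) ∧
      BddBelow (Set.range fun w => -L (d, w)))
    (ε : ℝ) (hε : 0 < ε) :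
    ∃ 𝒜 : Finset (Set Ω), ∃ Lhat : D → Set Ω → ℝ,
      (∀ A ∈ 𝒜, A.Nonempty) ∧
      (∀ A ∈ 𝒜, ∀ B ∈ 𝒜, A ≠ B → Disjoint A B) ∧
      (⋃ A ∈ 𝒜, A) = Set.univ ∧
      (𝒜.card : ℝ) ≤ (1 + 1 / ε) ^ (Fintype.card D) ∧
      (∀ d : D, ∀ A ∈ 𝒜, ∀ w ∈ A,
        |(-L (d, w)) - (-(Lhat d A))| ≤
          (sSup (Set.range fun w' => -L (d, w')) -
            sInf (Set.range fun w' => -L (d, w'))) * ε) := by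
  classical
  set n : ℕ := ⌈1/ε⌉₊ with hn
  have hn0 : 0 < n := Nat.ceil_pos.mpr (by positivity)
  have hnR : (0:ℝ) < n := by exact_mod_cast hn0
  have hinv : 1 / (n:ℝ) ≤ ε := by
    rw [div_le_iff₀ hnR]
    have h1 : (1:ℝ)/ε ≤ n := Nat.le_ceil _
    calc (1:ℝ) = (1/ε) * ε := by field_simp
    _ ≤ n * ε := mul_le_mul_of_nonneg_right h1 hε.le
    _ = ε * n := mul_comm _ _
  set f : D → Ω → ℝ := fun d w => -L (d, w) with hf
  set s : D → ℝ := fun d => sInf (Set.range (f d)) with hs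
  set M : D → ℝ := fun d => sSup (Set.range (f d)) with hM
  have hsle : ∀ d w, s d ≤ f d w := fun d w => csInf_le (hbdd d).2 ⟨w, rfl⟩
  have hleM : ∀ d w, f d w ≤ M d := fun d w => le_csSup (hbdd d).1 ⟨w, rfl⟩
  set g : D → Ω → ℝ := fun d w =>
    if 0 < M d - s d then (f d w - s d)/(M d - s d) else 0 with hg
  have hg0 : ∀ d w, 0 ≤ g d w := by
    intro d w
    simp only [hg]
    split_ifs with h
    · exact div_nonneg (by linarith [hsle d w]) (le_of_lt h)
    · exact le_refl 0
  have hg1 : ∀ d w, g d w ≤ 1 := by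
    intro d w
    simp only [hg]
    split_ifs with h
    · rw [div_le_one h]; linarith [hleM d w]
    · exact zero_le_one
  set φ : Ω → (D → Fin n) := fun w d =>
    ⟨min (n-1) ⌊g d w * n⌋₊, lt_of_le_of_lt (min_le_left _ _) (Nat.sub_lt hn0 one_pos)⟩
    with hφ
  -- key: i ≤ g*n ≤ i+1
  have key : ∀ d w, ((φ w d : ℕ) : ℝ) ≤ g d w * n ∧ g d w * n ≤ ((φ w d : ℕ) : ℝ) + 1 := by
    intro d w
    have hgn : 0 ≤ g d w * n := mul_nonneg (hg0 d w) hnR.le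
    constructor
    · calc ((φ w d : ℕ) : ℝ) ≤ (⌊g d w * n⌋₊ : ℝ) := by
            exact_mod_cast Nat.cast_le.mpr (min_le_right _ _)
        _ ≤ g d w * n := Nat.floor_le hgn
    · by_cases hc : ⌊g d w * n⌋₊ ≤ n - 1
      · have : (φ w d : ℕ) = ⌊g d w * n⌋₊ := min_eq_right hc
        rw [this]
        exact le_of_lt (Nat.lt_floor_add_one _)
      · have : (φ w d : ℕ) = n - 1 := min_eq_left (le_of_not_ge hc)
        rw [this]
        have : ((n-1 : ℕ) : ℝ) + 1 = n := by
          rw [Nat.cast_sub hn0]; simp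
        rw [this]
        have := hg1 d w
        nlinarith
  -- same bin ⇒ close
  have close : ∀ w w', φ w = φ w' → ∀ d, |f d w - f d w'| ≤ (M d - s d) * ε := by
    intro w w' hww d
    have hMs : s d ≤ M d := le_trans (hsle d w) (hleM d w)
    by_cases hr : 0 < M d - s d
    · have hgw : f d w = s d + g d w * (M d - s d) := by
        simp only [hg, if_pos hr]; field_simp; ring
      have hgw' : f d w' = s d + g d w' * (M d - s d) := by
        simp only [hg, if_pos hr]; field_simp; ring
      have hi : (φ w d : ℕ) = (φ w' d : ℕ) := by rw [hww]
      have k1 := key d w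
      have k2 := key d w'
      rw [hi] at k1
      have hgg : |g d w - g d w'| ≤ 1 / n := by
        have ha : (g d w - g d w') * n ≤ 1 := by nlinarith [k1.1, k1.2, k2.1, k2.2]
        have hb : (g d w' - g d w) * n ≤ 1 := by nlinarith [k1.1, k1.2, k2.1, k2.2]
        rw [abs_sub_le_iff]
        exact ⟨(le_div_iff₀ hnR).mpr ha, (le_div_iff₀ hnR).mpr hb⟩
      have heq : f d w - f d w' = (g d w - g d w') * (M d - s d) := by
        rw [hgw, hgw']; ring
      rw [heq, abs_mul, abs_of_pos hr]
      calc |g d w - g d w'| * (M d - s d) ≤ (1/n) * (M d - s d) :=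
            mul_le_mul_of_nonneg_right hgg hr.le
        _ ≤ ε * (M d - s d) := mul_le_mul_of_nonneg_right hinv hr.le
        _ = (M d - s d) * ε := mul_comm _ _
    · have h0 : M d - s d = 0 := le_antisymm (not_lt.mp hr) (by linarith)
      have hfw : f d w = s d := le_antisymm (by have := hleM d w; linarith) (hsle d w)
      have hfw' : f d w' = s d := le_antisymm (by have := hleM d w'; linarith) (hsle d w')
      rw [hfw, hfw', sub_self, abs_zero, h0, zero_mul]
  set 𝒜 : Finset (Set Ω) :=
    ((Finset.univ : Finset (D → Fin n)).filter (fun i => (φ ⁻¹' {i}).Nonempty)).image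
      (fun i => φ ⁻¹' {i}) with h𝒜
  set Lhat : D → Set Ω → ℝ := fun d A => if h : A.Nonempty then -(f d h.some) else 0
    with hLhat
  refine ⟨𝒜, Lhat, ?_, ?_, ?_, ?_, ?_⟩
  · intro A hA
    obtain ⟨i, hi, rfl⟩ := Finset.mem_image.mp hA
    exact (Finset.mem_filter.mp hi).2
  · intro A hA B hB hAB
    obtain ⟨i, hi, rfl⟩ := Finset.mem_image.mp hA
    obtain ⟨j, hj, rfl⟩ := Finset.mem_image.mp hB
    have hij : i ≠ j := fun h => hAB (by rw [h])
    rw [Set.disjoint_left]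
    intro w hw hw'
    exact hij (hw.symm.trans hw')
  · ext w
    simp only [Set.mem_iUnion, Set.mem_univ, iff_true]
    refine ⟨φ ⁻¹' {φ w}, ?_, rfl⟩
    refine Finset.mem_image.mpr ⟨φ w, Finset.mem_filter.mpr ⟨Finset.mem_univ _, ⟨w, rfl⟩⟩, rfl⟩
  · have hc1 : 𝒜.card ≤ (Fintype.card (D → Fin n)) := by
      calc 𝒜.card ≤ _ := Finset.card_image_le
        _ ≤ (Finset.univ : Finset (D → Fin n)).card := Finset.card_filter_le _ _
        _ = Fintype.card (D → Fin n) := rfl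
    have hc2 : Fintype.card (D → Fin n) = n ^ Fintype.card D := by
      simp [Fintype.card_fun]
    have hnle : (n:ℝ) ≤ 1 + 1/ε := by
      have := Nat.ceil_lt_add_one (a := 1/ε) (by positivity)
      rw [hn]; push_cast; linarith
    calc (𝒜.card : ℝ) ≤ ((n ^ Fintype.card D : ℕ) : ℝ) := by
          exact_mod_cast hc1.trans (le_of_eq hc2)
      _ = (n:ℝ) ^ Fintype.card D := by push_cast; ring
      _ ≤ (1 + 1/ε) ^ Fintype.card D := pow_le_pow_left₀ hnR.le hnle _
  · intro d A hA w hw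
    obtain ⟨i, hi, rfl⟩ := Finset.mem_image.mp hA
    have hne : (φ ⁻¹' {i}).Nonempty := (Finset.mem_filter.mp hi).2
    have hLA : -(Lhat d (φ ⁻¹' {i})) = f d hne.some := by
      simp only [hLhat, dif_pos hne, neg_neg]
    have hφw : φ w = i := hw
    have hφs : φ hne.some = i := hne.some_mem
    have := close w hne.some (hφw.trans hφs.symm) d
    rw [hLA]
    exact this
end

section
/- Let n be a positive integer, δ > 0, and M an arbitrary (possibly non-convex, non-closed) subset of the standard simplex Δ^n ⊆ ℝ^n. Let N be the smallest natural number with N ≥ n/δ. Then there exists a finite subset M̂ of Δ^n such that: (i) for every x ∈ M there is y ∈ M̂ with ∑_{i=1}^n |x_i − y_i| ≤ δ; (ii) for every y ∈ M̂ there is x ∈ M with ∑_{i=1}^n |x_i − y_i| ≤ δ; and (iii) |M̂| ≤ binomial(N+n−1, n−1). -/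
open Finset

-- averaging lemma
lemma avg_subset {ι : Type*} [DecidableEq ι] (f : ι → ℝ) :
    ∀ (r : ℕ) (s : Finset ι), r ≤ s.card →
      ∃ B ⊆ s, B.card = r ∧ (r : ℝ) * ∑ i ∈ s, f i ≤ (s.card : ℝ) * ∑ i ∈ B, f i := by
  intro r
  induction r with
  | zero => intro s _; exact ⟨∅, by simp, by simp, by simp⟩
  | succ r ih =>
    intro s hs
    have hne : s.Nonempty := card_pos.mp (lt_of_lt_of_le (Nat.succ_pos r) hs)
    obtain ⟨i, hi, hmax⟩ := s.exists_max_image f hne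
    have hT : ∑ j ∈ s, f j ≤ (s.card : ℝ) * f i := by
      calc ∑ j ∈ s, f j ≤ ∑ j ∈ s, f i := Finset.sum_le_sum (fun j hj => hmax j hj)
        _ = (s.card : ℝ) * f i := by rw [Finset.sum_const, nsmul_eq_mul]
    have hr' : r ≤ (s.erase i).card := by rw [Finset.card_erase_of_mem hi]; omega
    obtain ⟨B', hB's, hB'card, hB'⟩ := ih (s.erase i) hr'
    have hiB' : i ∉ B' := fun h => (Finset.mem_erase.mp (hB's h)).1 rfl
    refine ⟨insert i B', Finset.insert_subset hi (hB's.trans (Finset.erase_subset _ _)),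
      by rw [Finset.card_insert_of_notMem hiB', hB'card], ?_⟩
    rw [Finset.sum_insert hiB']
    have hse : ∑ j ∈ s.erase i, f j = ∑ j ∈ s, f j - f i := Finset.sum_erase_eq_sub hi
    have hce : ((s.erase i).card : ℝ) = (s.card : ℝ) - 1 := by
      rw [Finset.card_erase_of_mem hi]
      have : 1 ≤ s.card := hne.card_pos
      push_cast [Nat.cast_sub this]; ring
    rw [hse, hce] at hB'
    have hm : (r : ℝ) + 1 ≤ (s.card : ℝ) := by exact_mod_cast hs
    rcases Nat.eq_zero_or_pos r with hr0 | hr1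
    · subst hr0
      have : B' = ∅ := Finset.card_eq_zero.mp hB'card
      subst this
      simp only [Finset.sum_empty, Nat.cast_zero, zero_add, add_zero, one_mul]
      push_cast
      nlinarith [hT]
    · have h2m : (2 : ℝ) ≤ (s.card : ℝ) := by
        have : 2 ≤ s.card := le_trans (by omega) hs
        exact_mod_cast this
      have hrpos : (1 : ℝ) ≤ (r : ℝ) := by exact_mod_cast hr1
      push_cast
      nlinarith [mul_nonneg (by nlinarith : (0:ℝ) ≤ (s.card : ℝ) - 1 - r)
          (by nlinarith : (0:ℝ) ≤ (s.card : ℝ) * f i - ∑ j ∈ s, f j),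
        mul_le_mul_of_nonneg_left hB' (by positivity : (0:ℝ) ≤ (s.card : ℝ))]

-- rounding lemma
lemma round_simplex (n N : ℕ) (hn : 0 < n) (hN : 0 < N) (x : Fin n → ℝ)
    (hx0 : ∀ i, 0 ≤ x i) (hx1 : ∑ i, x i = 1) :
    ∃ k : Fin n → ℕ, (∑ i, k i = N) ∧ ∑ i, |x i - (k i : ℝ) / N| ≤ n / (2 * N) := by
  set a : Fin n → ℕ := fun i => ⌊(N : ℝ) * x i⌋₊ with ha
  set f : Fin n → ℝ := fun i => (N : ℝ) * x i - a i with hf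
  have hf0 : ∀ i, 0 ≤ f i := fun i => sub_nonneg.mpr (Nat.floor_le (mul_nonneg (Nat.cast_nonneg N) (hx0 i)))
  have hf1 : ∀ i, f i < 1 := fun i => by
    have := Nat.lt_floor_add_one ((N : ℝ) * x i)
    simp only [hf]; push_cast; linarith
  have hsum : ∑ i, ((N : ℝ) * x i) = N := by rw [← Finset.mul_sum, hx1, mul_one]
  have hsumf : ∑ i, f i = (N : ℝ) - ∑ i, (a i : ℝ) := by
    simp [hf, Finset.sum_sub_distrib, hsum]
  have hsa : ∑ i, a i ≤ N := by
    have : (↑(∑ i, a i) : ℝ) ≤ (N : ℝ) := by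
      push_cast
      calc ∑ i, (a i : ℝ) ≤ ∑ i, (N : ℝ) * x i :=
        Finset.sum_le_sum fun i _ => Nat.floor_le (mul_nonneg (Nat.cast_nonneg N) (hx0 i))
      _ = N := hsum
    exact_mod_cast this
  set r : ℕ := N - ∑ i, a i with hr
  have hrr : (r : ℝ) = ∑ i, f i := by
    rw [hsumf, hr, Nat.cast_sub hsa]; push_cast; ring
  have hrn : r ≤ n := by
    have : (r : ℝ) < n := by
      rw [hrr]
      calc ∑ i, f i < ∑ _i : Fin n, (1 : ℝ) :=
        Finset.sum_lt_sum_of_nonempty ⟨⟨0, hn⟩, Finset.mem_univ _⟩ (fun i _ => hf1 i)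
      _ = n := by simp
    exact_mod_cast this.le
  obtain ⟨B, -, hBcard, hBsum⟩ := avg_subset f r Finset.univ (by simpa using hrn)
  rw [← hrr] at hBsum
  simp only [Finset.card_univ, Fintype.card_fin] at hBsum
  refine ⟨fun i => a i + if i ∈ B then 1 else 0, ?_, ?_⟩
  · rw [Finset.sum_add_distrib]
    simp only [Finset.sum_ite_mem, Finset.univ_inter, Finset.sum_const, smul_eq_mul, mul_one,
      hBcard]
    omega
  · have hNR : (0 : ℝ) < N := by exact_mod_cast hN
    have key : ∀ i, |x i - ((a i + if i ∈ B then 1 else 0 : ℕ) : ℝ) / N|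
        = (if i ∈ B then 1 - f i else f i) / N := by
      intro i
      have hxk : x i - ((a i + if i ∈ B then 1 else 0 : ℕ) : ℝ) / N
          = (f i - (if i ∈ B then (1:ℝ) else 0)) / N := by
        simp only [hf]
        push_cast [apply_ite (Nat.cast : ℕ → ℝ)]
        field_simp
        ring
      rw [hxk, abs_div, abs_of_pos hNR]
      congr 1
      by_cases hiB : i ∈ B
      · simp only [hiB, if_true]
        rw [abs_of_nonpos (by linarith [hf1 i])]
        ring
      · simp only [hiB, if_false]
        rw [sub_zero, abs_of_nonneg (hf0 i)]
    rw [Finset.sum_congr rfl (fun i _ => key i), ← Finset.sum_div]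
    have hsplit : ∑ i, (if i ∈ B then 1 - f i else f i)
        = 2 * r - 2 * ∑ i ∈ B, f i := by
      have : ∀ i, (if i ∈ B then 1 - f i else f i)
          = f i + (if i ∈ B then 1 - 2 * f i else 0) := by
        intro i; by_cases hiB : i ∈ B <;> simp [hiB] <;> ring
      have h1 : ∑ i ∈ B, ((1:ℝ) - 2 * f i) = (r:ℝ) - 2 * ∑ i ∈ B, f i := by
        rw [Finset.sum_sub_distrib, Finset.sum_const, hBcard, nsmul_eq_mul,
          mul_one, ← Finset.mul_sum]
      rw [Finset.sum_congr rfl (fun i _ => this i), Finset.sum_add_distrib,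
        Finset.sum_ite_mem, Finset.univ_inter, h1, ← hrr]
      ring
    rw [hsplit, div_le_div_iff₀ hNR (by positivity)]
    have hnR : (0:ℝ) < n := by exact_mod_cast hn
    have hrnR : (r:ℝ) ≤ n := by exact_mod_cast hrn
    nlinarith [sq_nonneg ((n:ℝ) - 2 * r), hNR]

lemma card_adt (n N : ℕ) (hn : 0 < n) :
    (Finset.Nat.antidiagonalTuple n N).card ≤ (N + n - 1).choose (n - 1) := by
  classical
  have hφcard : ∀ k ∈ Finset.Nat.antidiagonalTuple n N,
      Multiset.card (∑ i, k i • ({i} : Multiset (Fin n))) = N := by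
    intro k hk
    rw [Finset.Nat.mem_antidiagonalTuple] at hk
    change Multiset.cardHom _ = N
    rw [map_sum]
    simpa using hk
  have hcount : ∀ (k : Fin n → ℕ) (j : Fin n),
      Multiset.count j (∑ i, k i • ({i} : Multiset (Fin n))) = k j := by
    intro k j
    rw [Multiset.count_sum']
    simp [Multiset.count_singleton, Finset.sum_ite_eq', eq_comm]
  have hinj : Set.InjOn (fun k : Fin n → ℕ => ∑ i, k i • ({i} : Multiset (Fin n)))
      (Finset.Nat.antidiagonalTuple n N) := by
    intro k _ k' _ h
    funext j
    rw [← hcount k j, ← hcount k' j]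
    exact congrArg (Multiset.count j) h
  have hmaps : ∀ k ∈ Finset.Nat.antidiagonalTuple n N,
      (fun k : Fin n → ℕ => ∑ i, k i • ({i} : Multiset (Fin n))) k ∈
        (Finset.univ : Finset (Sym (Fin n) N)).image Sym.toMultiset := by
    intro k hk
    exact Finset.mem_image.mpr ⟨⟨_, hφcard k hk⟩, Finset.mem_univ _, rfl⟩
  have := Finset.card_le_card_of_injOn _ hmaps hinj
  calc (Finset.Nat.antidiagonalTuple n N).card
      ≤ ((Finset.univ : Finset (Sym (Fin n) N)).image Sym.toMultiset).card := this
    _ ≤ (Finset.univ : Finset (Sym (Fin n) N)).card := Finset.card_image_le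
    _ = Fintype.card (Sym (Fin n) N) := Finset.card_univ
    _ = (n + N - 1).choose N := by
        rw [Sym.card_sym_eq_choose, Fintype.card_fin]
    _ = (N + n - 1).choose (n - 1) := by
        rw [Nat.add_comm n N]
        rw [← Nat.choose_symm (by omega : N ≤ N + n - 1)]
        congr 1
        omega

/-- Any subset `M` of the standard simplex `Δ^n` can be `δ`-approximated (in both
directions, in `ℓ¹` norm) by a finite subset `M̂` of `Δ^n` with
`|M̂| ≤ (N + n - 1).choose (n - 1)`, where `N` is the smallest natural number
with `N ≥ n / δ`. -/
theorem stmt_3 (n : ℕ) (hn : 0 < n) (δ : ℝ) (hδ : 0 < δ)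
    (M : Set (Fin n → ℝ))
    (hM : M ⊆ {x : Fin n → ℝ | (∀ i, 0 ≤ x i) ∧ ∑ i, x i = 1}) :
    ∃ Mhat : Finset (Fin n → ℝ),
      (↑Mhat : Set (Fin n → ℝ)) ⊆ {x : Fin n → ℝ | (∀ i, 0 ≤ x i) ∧ ∑ i, x i = 1} ∧
      (∀ x ∈ M, ∃ y ∈ Mhat, ∑ i, |x i - y i| ≤ δ) ∧
      (∀ y ∈ Mhat, ∃ x ∈ M, ∑ i, |x i - y i| ≤ δ) ∧
      Mhat.card ≤ (⌈(n : ℝ) / δ⌉₊ + n - 1).choose (n - 1) := by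
  classical
  set N : ℕ := ⌈(n : ℝ) / δ⌉₊ with hNdef
  have hN : 0 < N := Nat.ceil_pos.mpr (div_pos (by exact_mod_cast hn) hδ)
  have hNR : (0 : ℝ) < N := by exact_mod_cast hN
  have hNδ : (n : ℝ) / δ ≤ N := Nat.le_ceil _
  have hnet : (n : ℝ) / (2 * N) ≤ δ / 2 := by
    rw [div_le_div_iff₀ (by positivity) (by positivity)]
    rw [div_le_iff₀ hδ] at hNδ
    nlinarith
  set P : (Fin n → ℝ) → Prop := fun g => ∃ x ∈ M, ∑ i, |x i - g i| ≤ δ / 2 with hP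
  set c : (Fin n → ℝ) → (Fin n → ℝ) := fun g => if h : P g then h.choose else fun _ => 0
    with hc
  set G : Finset (Fin n → ℝ) :=
    (Finset.Nat.antidiagonalTuple n N).image (fun k i => (k i : ℝ) / N) with hG
  refine ⟨(G.filter P).image c, ?_, ?_, ?_, ?_⟩
  · intro y hy
    obtain ⟨g, hg, hgy⟩ := Finset.mem_image.mp hy
    have hPg : P g := (Finset.mem_filter.mp hg).2
    have : c g = hPg.choose := dif_pos hPg
    have hmem : hPg.choose ∈ M := hPg.choose_spec.1
    rw [← hgy, this]
    exact hM hmem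
  · intro x hx
    obtain ⟨hx0, hx1⟩ := hM hx
    obtain ⟨k, hk, herr⟩ := round_simplex n N hn hN x hx0 hx1
    set g : Fin n → ℝ := fun i => (k i : ℝ) / N with hgdef
    have hgG : g ∈ G := Finset.mem_image.mpr
      ⟨k, Finset.Nat.mem_antidiagonalTuple.mpr hk, rfl⟩
    have herr' : ∑ i, |x i - g i| ≤ δ / 2 := herr.trans hnet
    have hPg : P g := ⟨x, hx, herr'⟩
    refine ⟨c g, Finset.mem_image.mpr ⟨g, Finset.mem_filter.mpr ⟨hgG, hPg⟩, rfl⟩, ?_⟩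
    have hcg : c g = hPg.choose := dif_pos hPg
    obtain ⟨-, hclose⟩ := hPg.choose_spec
    calc ∑ i, |x i - c g i| ≤ ∑ i, (|x i - g i| + |g i - c g i|) :=
          Finset.sum_le_sum fun i _ => abs_sub_le _ _ _
      _ = ∑ i, |x i - g i| + ∑ i, |g i - c g i| := Finset.sum_add_distrib
      _ ≤ δ / 2 + δ / 2 := by
          refine add_le_add herr' ?_
          have : ∑ i, |g i - c g i| = ∑ i, |c g i - g i| := by
            exact Finset.sum_congr rfl fun i _ => abs_sub_comm _ _
          rw [this, hcg]
          exact hclose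
      _ = δ := by ring
  · intro y hy
    obtain ⟨g, hg, hgy⟩ := Finset.mem_image.mp hy
    have hPg : P g := (Finset.mem_filter.mp hg).2
    have hcg : c g = hPg.choose := dif_pos hPg
    refine ⟨y, ?_, ?_⟩
    · rw [← hgy, hcg]; exact hPg.choose_spec.1
    · simp [le_of_lt hδ]
  · calc ((G.filter P).image c).card ≤ (G.filter P).card := Finset.card_image_le
      _ ≤ G.card := Finset.card_filter_le _ _
      _ ≤ (Finset.Nat.antidiagonalTuple n N).card := Finset.card_image_le
      _ ≤ (N + n - 1).choose (n - 1) := card_adt n N hn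
end

section
/- Let Ω be a measurable space, 𝒜 a finite partition of Ω into nonempty measurable sets, P a probability measure on Ω, f : Ω → ℝ a bounded measurable function, f̂ : 𝒜 → ℝ, and P̂ a probability mass function on 𝒜. If ε ≥ 0, δ ≥ 0, f ∼_ε f̂ and P ∼_δ P̂, then |∫_Ω f dP − ∑_{A∈𝒜} f̂(A)·P̂(A)| ≤ (sup f − inf f)·(ε + δ(1+2ε)). -/
open MeasureTheory

/-- First bound of Lemma 3: if `f ∼_ε f̂` and `P ∼_δ P̂` then
`|E_P(f) − E_P̂(f̂)| ≤ (sup f − inf f)(ε + δ(1 + 2ε))`. -/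
theorem stmt_4 {Ω : Type*} [MeasurableSpace Ω] [Nonempty Ω]
    (𝒜 : Finset (Set Ω))
    (hne : ∀ A ∈ 𝒜, A.Nonempty)
    (hmeas : ∀ A ∈ 𝒜, MeasurableSet A)
    (hdisj : ∀ A ∈ 𝒜, ∀ B ∈ 𝒜, A ≠ B → Disjoint A B)
    (hcover : (⋃ A ∈ 𝒜, A) = Set.univ)
    (P : Measure Ω) [IsProbabilityMeasure P]
    (f : Ω → ℝ) (hf : Measurable f)
    (hfa : BddAbove (Set.range f)) (hfb : BddBelow (Set.range f))
    (fhat : Set Ω → ℝ) (Phat : Set Ω → ℝ)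
    (hPhat0 : ∀ A ∈ 𝒜, 0 ≤ Phat A) (hPhat1 : ∑ A ∈ 𝒜, Phat A = 1)
    (ε δ : ℝ) (hε : 0 ≤ ε) (hδ : 0 ≤ δ)
    (hfsim : ∀ A ∈ 𝒜, ∀ w ∈ A,
      |f w - fhat A| ≤ (sSup (Set.range f) - sInf (Set.range f)) * ε)
    (hPsim : ∑ A ∈ 𝒜, |(P A).toReal - Phat A| ≤ δ) :
    |(∫ w, f w ∂P) - ∑ A ∈ 𝒜, fhat A * Phat A| ≤
      (sSup (Set.range f) - sInf (Set.range f)) * (ε + δ * (1 + 2 * ε)) := by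
  classical
  set M := sSup (Set.range f) with hM
  set m := sInf (Set.range f) with hm
  obtain ⟨w0⟩ := ‹Nonempty Ω›
  have hfM : ∀ w, f w ≤ M := fun w => le_csSup hfa ⟨w, rfl⟩
  have hmf : ∀ w, m ≤ f w := fun w => csInf_le hfb ⟨w, rfl⟩
  have hR : (0:ℝ) ≤ M - m := by have h1 := hmf w0; have h2 := hfM w0; linarith
  -- integrability
  have hint : Integrable f P := by
    refine ⟨hf.aestronglyMeasurable, ?_⟩
    apply MeasureTheory.HasFiniteIntegral.of_bounded (C := max |m| |M|)
    filter_upwards with w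
    rw [Real.norm_eq_abs, abs_le]
    constructor
    · have := hmf w
      have : -|m| ≤ f w := by have := neg_abs_le m; linarith
      have h := le_max_left |m| |M|; linarith
    · have := hfM w
      have h2 : f w ≤ |M| := le_trans this (le_abs_self M)
      exact h2.trans (le_max_right _ _)
  have hd : (↑𝒜 : Set (Set Ω)).PairwiseDisjoint id := by
    intro A hA B hB hAB
    exact hdisj A hA B hB hAB
  have hPsum : ∑ A ∈ 𝒜, (P A).toReal = 1 := by
    have h1 : P (⋃ A ∈ 𝒜, A) = ∑ A ∈ 𝒜, P A :=
      measure_biUnion_finset hd (fun A hA => hmeas A hA)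
    rw [hcover, measure_univ] at h1
    have h2 : (∑ A ∈ 𝒜, P A).toReal = ∑ A ∈ 𝒜, (P A).toReal :=
      ENNReal.toReal_sum (fun A _ => measure_ne_top P A)
    rw [← h2, ← h1, ENNReal.toReal_one]
  have hsplit : ∫ w, f w ∂P = ∑ A ∈ 𝒜, ∫ w in A, f w ∂P := by
    rw [← setIntegral_univ, ← hcover]
    exact integral_biUnion_finset 𝒜 (fun A hA => hmeas A hA)
      (fun A hA B hB hAB => hdisj A hA B hB hAB)
      (fun A _ => hint.integrableOn)
  have hsetbd : ∀ A ∈ 𝒜,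
      |(∫ w in A, f w ∂P) - fhat A * (P A).toReal| ≤ (M - m) * ε * (P A).toReal := by
    intro A hA
    have h1 : (∫ w in A, f w ∂P) - fhat A * (P A).toReal
        = ∫ w in A, (f w - fhat A) ∂P := by
      rw [integral_sub hint.integrableOn
        (integrableOn_const (measure_lt_top P A).ne), setIntegral_const,
        smul_eq_mul, show P.real A = (P A).toReal from rfl]
      ring
    rw [h1, ← Real.norm_eq_abs]
    refine norm_setIntegral_le_of_norm_le_const (measure_lt_top P A) ?_
    · intro w hw
      rw [Real.norm_eq_abs]
      exact hfsim A hA w hw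
  have key1 : |(∫ w, f w ∂P) - ∑ A ∈ 𝒜, fhat A * (P A).toReal| ≤ (M - m) * ε := by
    rw [hsplit, ← Finset.sum_sub_distrib]
    calc |∑ A ∈ 𝒜, ((∫ w in A, f w ∂P) - fhat A * (P A).toReal)|
        ≤ ∑ A ∈ 𝒜, |(∫ w in A, f w ∂P) - fhat A * (P A).toReal| :=
          Finset.abs_sum_le_sum_abs _ _
      _ ≤ ∑ A ∈ 𝒜, (M - m) * ε * (P A).toReal := Finset.sum_le_sum hsetbd
      _ = (M - m) * ε := by rw [← Finset.mul_sum, hPsum, mul_one]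
  set c := (m + M) / 2 with hc
  have hfhat : ∀ A ∈ 𝒜, |fhat A - c| ≤ (M - m) * (1/2 + ε) := by
    intro A hA
    obtain ⟨w, hw⟩ := hne A hA
    have h1 := hfsim A hA w hw
    have h2 : |f w - c| ≤ (M - m) / 2 := by
      rw [abs_le]
      constructor
      · have := hmf w; rw [hc]; linarith
      · have := hfM w; rw [hc]; linarith
    have h3 : |fhat A - c| ≤ |fhat A - f w| + |f w - c| := abs_sub_le _ _ _
    rw [abs_sub_comm (fhat A) (f w)] at h3
    linarith
  have hsumzero : ∑ A ∈ 𝒜, ((P A).toReal - Phat A) = 0 := by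
    rw [Finset.sum_sub_distrib, hPsum, hPhat1]; ring
  have key2 : |∑ A ∈ 𝒜, fhat A * (P A).toReal - ∑ A ∈ 𝒜, fhat A * Phat A|
      ≤ (M - m) * (1/2 + ε) * δ := by
    have e1 : ∑ A ∈ 𝒜, fhat A * (P A).toReal - ∑ A ∈ 𝒜, fhat A * Phat A
        = ∑ A ∈ 𝒜, (fhat A - c) * ((P A).toReal - Phat A) := by
      have e2 : ∑ A ∈ 𝒜, (fhat A - c) * ((P A).toReal - Phat A)
          = (∑ A ∈ 𝒜, fhat A * (P A).toReal - ∑ A ∈ 𝒜, fhat A * Phat A)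
            - c * ∑ A ∈ 𝒜, ((P A).toReal - Phat A) := by
        rw [Finset.mul_sum, ← Finset.sum_sub_distrib, ← Finset.sum_sub_distrib]
        exact Finset.sum_congr rfl fun A _ => by ring
      rw [e2, hsumzero, mul_zero, sub_zero]
    rw [e1]
    calc |∑ A ∈ 𝒜, (fhat A - c) * ((P A).toReal - Phat A)|
        ≤ ∑ A ∈ 𝒜, |(fhat A - c) * ((P A).toReal - Phat A)| :=
          Finset.abs_sum_le_sum_abs _ _
      _ ≤ ∑ A ∈ 𝒜, (M - m) * (1/2 + ε) * |(P A).toReal - Phat A| := by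
          refine Finset.sum_le_sum fun A hA => ?_
          rw [abs_mul]
          exact mul_le_mul_of_nonneg_right (hfhat A hA) (abs_nonneg _)
      _ = (M - m) * (1/2 + ε) * ∑ A ∈ 𝒜, |(P A).toReal - Phat A| := by
          rw [Finset.mul_sum]
      _ ≤ (M - m) * (1/2 + ε) * δ := by
          refine mul_le_mul_of_nonneg_left hPsim ?_
          positivity
  have tri : |(∫ w, f w ∂P) - ∑ A ∈ 𝒜, fhat A * Phat A|
      ≤ |(∫ w, f w ∂P) - ∑ A ∈ 𝒜, fhat A * (P A).toReal|
        + |∑ A ∈ 𝒜, fhat A * (P A).toReal - ∑ A ∈ 𝒜, fhat A * Phat A| := by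
    have := abs_sub_le (∫ w, f w ∂P) (∑ A ∈ 𝒜, fhat A * (P A).toReal)
      (∑ A ∈ 𝒜, fhat A * Phat A)
    linarith
  have : |(∫ w, f w ∂P) - ∑ A ∈ 𝒜, fhat A * Phat A|
      ≤ (M - m) * ε + (M - m) * (1/2 + ε) * δ := by linarith
  refine this.trans ?_
  nlinarith [mul_nonneg hR hδ, mul_nonneg (mul_nonneg hR hδ) hε]
end

section
/- Let Ω be a measurable space, 𝒜 a finite partition of Ω into nonempty measurable sets, P a probability measure on Ω, f : Ω → ℝ a bounded measurable function, f̂ : 𝒜 → ℝ, and P̂ a probability mass function on 𝒜. If 0 < ε < 1/2, δ ≥ 0, f ∼_ε f̂ and P ∼_δ P̂, then |∫_Ω f dP − ∑_{A∈𝒜} f̂(A)·P̂(A)| ≤ (max_{A∈𝒜} f̂(A) − min_{A∈𝒜} f̂(A))·(ε/(1−2ε) + δ). -/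
open MeasureTheory

/-- Second bound of Lemma 3: if `f ∼_ε f̂` (with `0 < ε < 1/2`) and `P ∼_δ P̂` then
`|E_P(f) − E_P̂(f̂)| ≤ (sup f̂ − inf f̂)(ε/(1−2ε) + δ)`. -/
theorem stmt_5 {Ω : Type*} [MeasurableSpace Ω] [Nonempty Ω]
    (𝒜 : Finset (Set Ω)) (h𝒜 : 𝒜.Nonempty)
    (hne : ∀ A ∈ 𝒜, A.Nonempty)
    (hmeas : ∀ A ∈ 𝒜, MeasurableSet A)
    (hdisj : ∀ A ∈ 𝒜, ∀ B ∈ 𝒜, A ≠ B → Disjoint A B)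
    (hcover : (⋃ A ∈ 𝒜, A) = Set.univ)
    (P : Measure Ω) [IsProbabilityMeasure P]
    (f : Ω → ℝ) (hf : Measurable f)
    (hfa : BddAbove (Set.range f)) (hfb : BddBelow (Set.range f))
    (fhat : Set Ω → ℝ) (Phat : Set Ω → ℝ)
    (hPhat0 : ∀ A ∈ 𝒜, 0 ≤ Phat A) (hPhat1 : ∑ A ∈ 𝒜, Phat A = 1)
    (ε δ : ℝ) (hε0 : 0 < ε) (hε2 : ε < 1 / 2) (hδ : 0 ≤ δ)
    (hfsim : ∀ A ∈ 𝒜, ∀ w ∈ A,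
      |f w - fhat A| ≤ (sSup (Set.range f) - sInf (Set.range f)) * ε)
    (hPsim : ∑ A ∈ 𝒜, |(P A).toReal - Phat A| ≤ δ) :
    |(∫ w, f w ∂P) - ∑ A ∈ 𝒜, fhat A * Phat A| ≤
      (𝒜.sup' h𝒜 fhat - 𝒜.inf' h𝒜 fhat) * (ε / (1 - 2 * ε) + δ) := by
  classical
  set M := sSup (Set.range f) with hMdef
  set m := sInf (Set.range f) with hmdef
  set R := M - m with hRdef
  set S := 𝒜.sup' h𝒜 fhat - 𝒜.inf' h𝒜 fhat with hSdef
  have hmem : ∀ w : Ω, ∃ A ∈ 𝒜, w ∈ A := by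
    intro w
    have hw : w ∈ ⋃ A ∈ 𝒜, A := hcover ▸ Set.mem_univ w
    simpa using hw
  have hrange : (Set.range f).Nonempty := Set.range_nonempty f
  have hmM : m ≤ M := csInf_le_csSup hrange hfb hfa
  have hR0 : 0 ≤ R := sub_nonneg.2 hmM
  have h1 : 0 < 1 - 2 * ε := by linarith
  have hM : M ≤ 𝒜.sup' h𝒜 fhat + R * ε := by
    apply csSup_le hrange
    rintro y ⟨w, rfl⟩
    obtain ⟨A, hA, hw⟩ := hmem w
    have h2 := (abs_le.1 (hfsim A hA w hw)).2
    have h3 : fhat A ≤ 𝒜.sup' h𝒜 fhat := Finset.le_sup' fhat hA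
    linarith
  have hm : 𝒜.inf' h𝒜 fhat - R * ε ≤ m := by
    apply le_csInf hrange
    rintro y ⟨w, rfl⟩
    obtain ⟨A, hA, hw⟩ := hmem w
    have h2 := (abs_le.1 (hfsim A hA w hw)).1
    have h3 : 𝒜.inf' h𝒜 fhat ≤ fhat A := Finset.inf'_le fhat hA
    linarith
  have hRS : R * (1 - 2 * ε) ≤ S := by
    simp only [hSdef]; nlinarith
  have hS0 : 0 ≤ S := le_trans (mul_nonneg hR0 h1.le) hRS
  have hRε : R * ε ≤ S * (ε / (1 - 2 * ε)) := by
    rw [mul_div_assoc', le_div_iff₀ h1]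
    nlinarith
  -- bounds on f
  have hfl : ∀ w, m ≤ f w := fun w => csInf_le hfb (Set.mem_range_self w)
  have hfu : ∀ w, f w ≤ M := fun w => le_csSup hfa (Set.mem_range_self w)
  have hint : Integrable f P := by
    refine ⟨hf.aestronglyMeasurable, HasFiniteIntegral.of_bounded
      (C := |m| + |M|) (Filter.Eventually.of_forall fun w => ?_)⟩
    have h4 := hfl w; have h5 := hfu w
    have h6 : -|m| ≤ m := neg_abs_le m
    have h7 : M ≤ |M| := le_abs_self M
    have h8 : (0:ℝ) ≤ |M| := abs_nonneg M
    have h9 : (0:ℝ) ≤ |m| := abs_nonneg m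
    rw [Real.norm_eq_abs, abs_le]
    constructor <;> [linarith; linarith]
  -- total mass splits
  have hfin : ∀ A ∈ 𝒜, P A ≠ ⊤ := fun A _ => measure_ne_top P A
  have hpd : (𝒜 : Set (Set Ω)).PairwiseDisjoint id := by
    intro A hA B hB hAB
    exact hdisj A hA B hB hAB
  have hmeasU : P (⋃ A ∈ 𝒜, A) = ∑ A ∈ 𝒜, P A :=
    measure_biUnion_finset hpd hmeas
  have hPsum : ∑ A ∈ 𝒜, (P A).toReal = 1 := by
    have h8 : P (⋃ A ∈ 𝒜, A) = 1 := by rw [hcover]; exact measure_univ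
    rw [h8] at hmeasU
    have := congrArg ENNReal.toReal hmeasU
    rwa [ENNReal.toReal_one, ENNReal.toReal_sum hfin, eq_comm] at this
  -- integral splits
  have hsplit : ∫ w, f w ∂P = ∑ A ∈ 𝒜, ∫ w in A, f w ∂P := by
    rw [← setIntegral_univ, ← hcover]
    exact integral_biUnion_finset 𝒜 hmeas hpd fun A _ => hint.integrableOn
  -- per-cell bound
  have hcell : ∀ A ∈ 𝒜, |(∫ w in A, f w ∂P) - fhat A * (P A).toReal|
      ≤ R * ε * (P A).toReal := by
    intro A hA
    have heq : (∫ w in A, f w ∂P) - fhat A * (P A).toReal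
        = ∫ w in A, (f w - fhat A) ∂P := by
      rw [integral_sub hint.integrableOn (integrableOn_const (measure_ne_top P A)),
        setIntegral_const, smul_eq_mul, mul_comm]; rfl
    rw [heq]
    have : ‖∫ w in A, (f w - fhat A) ∂P‖ ≤ R * ε * (P A).toReal := norm_setIntegral_le_of_norm_le_const (measure_lt_top P A)
      (f := fun w => f w - fhat A) (C := R * ε)
      (fun w hw => by rw [Real.norm_eq_abs]; simpa [← hRdef] using hfsim A hA w hw)
    rw [Real.norm_eq_abs] at this
    linarith [this]
  have hbound1 : |(∫ w, f w ∂P) - ∑ A ∈ 𝒜, fhat A * (P A).toReal| ≤ R * ε := by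
    rw [hsplit, ← Finset.sum_sub_distrib]
    calc |∑ A ∈ 𝒜, ((∫ w in A, f w ∂P) - fhat A * (P A).toReal)|
        ≤ ∑ A ∈ 𝒜, |(∫ w in A, f w ∂P) - fhat A * (P A).toReal| :=
          Finset.abs_sum_le_sum_abs _ _
      _ ≤ ∑ A ∈ 𝒜, R * ε * (P A).toReal := Finset.sum_le_sum hcell
      _ = R * ε := by rw [← Finset.mul_sum, hPsum, mul_one]
  -- probability mismatch bound
  set c := 𝒜.inf' h𝒜 fhat with hcdef
  have hzero : ∑ A ∈ 𝒜, ((P A).toReal - Phat A) = 0 := by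
    rw [Finset.sum_sub_distrib, hPsum, hPhat1, sub_self]
  have hbound2 : |(∑ A ∈ 𝒜, fhat A * (P A).toReal) - ∑ A ∈ 𝒜, fhat A * Phat A|
      ≤ S * δ := by
    have heq2 : (∑ A ∈ 𝒜, fhat A * (P A).toReal) - ∑ A ∈ 𝒜, fhat A * Phat A
        = ∑ A ∈ 𝒜, (fhat A - c) * ((P A).toReal - Phat A) := by
      simp only [sub_mul, mul_sub]
      rw [Finset.sum_sub_distrib, Finset.sum_sub_distrib, Finset.sum_sub_distrib,
        ← Finset.mul_sum, ← Finset.mul_sum]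
      have : (∑ A ∈ 𝒜, (P A).toReal) - ∑ A ∈ 𝒜, Phat A = 0 := by
        rw [hPsum, hPhat1, sub_self]
      rw [hPsum, hPhat1]
      ring
    rw [heq2]
    calc |∑ A ∈ 𝒜, (fhat A - c) * ((P A).toReal - Phat A)|
        ≤ ∑ A ∈ 𝒜, |(fhat A - c) * ((P A).toReal - Phat A)| :=
          Finset.abs_sum_le_sum_abs _ _
      _ ≤ ∑ A ∈ 𝒜, S * |(P A).toReal - Phat A| := by
          apply Finset.sum_le_sum
          intro A hA
          rw [abs_mul]
          apply mul_le_mul_of_nonneg_right _ (abs_nonneg _)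
          rw [abs_of_nonneg (sub_nonneg.2 (Finset.inf'_le fhat hA))]
          have := Finset.le_sup' fhat hA
          simp only [hSdef, hcdef]
          linarith
      _ = S * ∑ A ∈ 𝒜, |(P A).toReal - Phat A| := by rw [Finset.mul_sum]
      _ ≤ S * δ := mul_le_mul_of_nonneg_left hPsim hS0
  calc |(∫ w, f w ∂P) - ∑ A ∈ 𝒜, fhat A * Phat A|
      ≤ |(∫ w, f w ∂P) - ∑ A ∈ 𝒜, fhat A * (P A).toReal|
        + |(∑ A ∈ 𝒜, fhat A * (P A).toReal) - ∑ A ∈ 𝒜, fhat A * Phat A| := by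
        have := abs_sub_abs_le_abs_sub ((∫ w, f w ∂P) - ∑ A ∈ 𝒜, fhat A * Phat A) 0
        exact abs_sub_le _ _ _
    _ ≤ R * ε + S * δ := add_le_add hbound1 hbound2
    _ ≤ S * (ε / (1 - 2 * ε)) + S * δ := add_le_add hRε le_rfl
    _ = S * (ε / (1 - 2 * ε) + δ) := by ring
end

section
/- Let Ω be a measurable space, 𝒜 a finite partition of Ω into nonempty measurable sets, D a finite nonempty set, L : D × Ω → ℝ with each f_d = −L(d,·) bounded and measurable, L̂ : D × 𝒜 → ℝ, ℳ a nonempty set of probability measures on Ω, and ℳ̂ a nonempty set of probability mass functions on 𝒜. If 0 < ε < 1/2, δ ≥ 0, L ∼_ε L̂ and ℳ ∼_δ ℳ̂, then for every γ ≥ 0: opt^γ(Ω,D,ℳ,L) ⊆ opt^{γ/(1−2ε) + 2(ε/(1−2ε) + δ)}(𝒜,D,ℳ̂,L̂). -/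
open MeasureTheory

/-- Theorem 1, Eq. (1): if `L ∼_ε L̂` and `ℳ ∼_δ ℳ̂`, then
`opt^γ(Ω,D,ℳ,L) ⊆ opt^{γ/(1−2ε) + 2(ε/(1−2ε) + δ)}(𝒜,D,ℳ̂,L̂)`. -/
theorem stmt_6 {Ω : Type*} [MeasurableSpace Ω] [Nonempty Ω]
    {D : Type*} [Fintype D] [Nonempty D]
    (𝒜 : Finset (Set Ω)) (h𝒜 : 𝒜.Nonempty)
    (hne : ∀ A ∈ 𝒜, A.Nonempty)
    (hmeas : ∀ A ∈ 𝒜, MeasurableSet A)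
    (hdisj : ∀ A ∈ 𝒜, ∀ B ∈ 𝒜, A ≠ B → Disjoint A B)
    (hcover : (⋃ A ∈ 𝒜, A) = Set.univ)
    (L : D × Ω → ℝ) (Lhat : D → Set Ω → ℝ)
    (hfmeas : ∀ d : D, Measurable fun w => -L (d, w))
    (hfa : ∀ d : D, BddAbove (Set.range fun w => -L (d, w)))
    (hfb : ∀ d : D, BddBelow (Set.range fun w => -L (d, w)))
    (ℳ : Set (Measure Ω)) (hℳne : ℳ.Nonempty)
    (hℳprob : ∀ P ∈ ℳ, IsProbabilityMeasure P)
    (ℳhat : Set (Set Ω → ℝ)) (hℳhatne : ℳhat.Nonempty)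
    (hℳhatprob : ∀ Phat ∈ ℳhat, (∀ A ∈ 𝒜, 0 ≤ Phat A) ∧ ∑ A ∈ 𝒜, Phat A = 1)
    (ε δ : ℝ) (hε0 : 0 < ε) (hε2 : ε < 1 / 2) (hδ : 0 ≤ δ)
    (hLsim : ∀ d : D, ∀ A ∈ 𝒜, ∀ w ∈ A,
      |(-L (d, w)) - (-(Lhat d A))| ≤
        (sSup (Set.range fun w' => -L (d, w')) -
          sInf (Set.range fun w' => -L (d, w'))) * ε)
    (hMsim1 : ∀ P ∈ ℳ, ∃ Phat ∈ ℳhat, ∑ A ∈ 𝒜, |(P A).toReal - Phat A| ≤ δ)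
    (hMsim2 : ∀ Phat ∈ ℳhat, ∃ P ∈ ℳ, ∑ A ∈ 𝒜, |(P A).toReal - Phat A| ≤ δ)
    (γ : ℝ) (hγ : 0 ≤ γ) :
    {d : D | ∃ P ∈ ℳ, ∀ e : D,
        (∫ w, (-L (e, w)) ∂P) - (∫ w, (-L (d, w)) ∂P) ≤
          γ * Finset.univ.sup' Finset.univ_nonempty
            (fun d' : D => sSup (Set.range fun w => -L (d', w)) -
              sInf (Set.range fun w => -L (d', w)))} ⊆
    {d : D | ∃ Phat ∈ ℳhat, ∀ e : D,
        (∑ A ∈ 𝒜, (-(Lhat e A)) * Phat A) - (∑ A ∈ 𝒜, (-(Lhat d A)) * Phat A) ≤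
          (γ / (1 - 2 * ε) + 2 * (ε / (1 - 2 * ε) + δ)) *
            Finset.univ.sup' Finset.univ_nonempty
              (fun d' : D => 𝒜.sup' h𝒜 (fun A => -(Lhat d' A)) -
                𝒜.inf' h𝒜 (fun A => -(Lhat d' A)))} := by
  intro d hd
  simp only [Set.mem_setOf_eq] at hd ⊢
  obtain ⟨P, hP, hopt⟩ := hd
  haveI hPprob := hℳprob P hP
  obtain ⟨Phat, hPhat, hPP⟩ := hMsim1 P hP
  obtain ⟨hPhat0, hPhatsum⟩ := hℳhatprob Phat hPhat
  refine ⟨Phat, hPhat, ?_⟩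
  have hc : (0:ℝ) < 1 - 2*ε := by linarith
  have hmemA : ∀ w : Ω, ∃ A ∈ 𝒜, w ∈ A := by
    intro w
    have hw : w ∈ ⋃ A ∈ 𝒜, A := by rw [hcover]; trivial
    simpa using hw
  have hle1 : ∀ (d' : D) (w : Ω), -L (d', w) ≤ sSup (Set.range fun w' => -L (d', w')) :=
    fun d' w => le_csSup (hfa d') ⟨w, rfl⟩
  have hle2 : ∀ (d' : D) (w : Ω), sInf (Set.range fun w' => -L (d', w')) ≤ -L (d', w) :=
    fun d' w => csInf_le (hfb d') ⟨w, rfl⟩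
  have hRd0 : ∀ d' : D, 0 ≤ sSup (Set.range fun w' => -L (d', w'))
      - sInf (Set.range fun w' => -L (d', w')) := by
    intro d'
    obtain ⟨w⟩ := ‹Nonempty Ω›
    linarith [hle1 d' w, hle2 d' w]
  have hPdisj : (↑𝒜 : Set (Set Ω)).PairwiseDisjoint id :=
    fun A hA B hB hAB => hdisj A (by simpa using hA) B (by simpa using hB) hAB
  have hPsum : ∑ A ∈ 𝒜, P A = 1 := by
    have h := measure_biUnion_finset (μ := P) hPdisj (fun A hA => hmeas A hA)
    simp only [id] at h
    rw [← h, hcover, measure_univ]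
  have hsum1 : ∑ A ∈ 𝒜, (P A).toReal = 1 := by
    rw [← ENNReal.toReal_sum (fun A _ => measure_ne_top P A), hPsum, ENNReal.toReal_one]
  have hint : ∀ d' : D, Integrable (fun w => -L (d', w)) P := by
    intro d'
    refine ⟨(hfmeas d').aestronglyMeasurable, ?_⟩
    apply MeasureTheory.HasFiniteIntegral.of_bounded
      (C := max |sInf (Set.range fun w' => -L (d', w'))| |sSup (Set.range fun w' => -L (d', w'))|)
    filter_upwards with w
    rw [Real.norm_eq_abs]
    exact abs_le_max_abs_abs (hle2 d' w) (hle1 d' w)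
  have hsplit : ∀ d' : D, ∫ w, -L (d', w) ∂P = ∑ A ∈ 𝒜, ∫ w in A, -L (d', w) ∂P := by
    intro d'
    rw [← setIntegral_univ, ← hcover]
    exact integral_biUnion_finset (s := id) 𝒜 (fun A hA => hmeas A hA) hPdisj
      (fun A hA => (hint d').integrableOn)
  have hIS : ∀ d' : D,
      |(∫ w, -L (d', w) ∂P) - ∑ A ∈ 𝒜, (-(Lhat d' A)) * (P A).toReal|
        ≤ (sSup (Set.range fun w' => -L (d', w'))
            - sInf (Set.range fun w' => -L (d', w'))) * ε := by
    intro d'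
    rw [hsplit d', ← Finset.sum_sub_distrib]
    refine (Finset.abs_sum_le_sum_abs _ _).trans ?_
    have hb : ∀ A ∈ 𝒜, |(∫ w in A, -L (d', w) ∂P) - (-(Lhat d' A)) * (P A).toReal|
        ≤ ((sSup (Set.range fun w' => -L (d', w'))
            - sInf (Set.range fun w' => -L (d', w'))) * ε) * (P A).toReal := by
      intro A hA
      have heq : (∫ w in A, -L (d', w) ∂P) - (-(Lhat d' A)) * (P A).toReal
          = ∫ w in A, (-L (d', w) - (-(Lhat d' A))) ∂P := by
        rw [integral_sub (hint d').integrableOn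
          (integrableOn_const (measure_ne_top P A))]
        rw [setIntegral_const]
        simp [mul_comm, Measure.real]
      rw [heq]
      have hn := norm_setIntegral_le_of_norm_le_const (μ := P) (s := A)
        (measure_lt_top P A)
        (C := (sSup (Set.range fun w' => -L (d', w'))
            - sInf (Set.range fun w' => -L (d', w'))) * ε)
        (fun w hw => by rw [Real.norm_eq_abs]; exact hLsim d' A hA w hw)
      simpa [Real.norm_eq_abs, Measure.real] using hn
    refine (Finset.sum_le_sum hb).trans_eq ?_
    rw [← Finset.mul_sum, hsum1, mul_one]
  have hRhd0 : ∀ d' : D, 0 ≤ 𝒜.sup' h𝒜 (fun A => -(Lhat d' A))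
      - 𝒜.inf' h𝒜 (fun A => -(Lhat d' A)) := by
    intro d'
    obtain ⟨A0, hA0⟩ := h𝒜
    linarith [Finset.le_sup' (fun A => -(Lhat d' A)) hA0,
      Finset.inf'_le (fun A => -(Lhat d' A)) hA0]
  have hST : ∀ d' : D,
      |(∑ A ∈ 𝒜, (-(Lhat d' A)) * (P A).toReal) - ∑ A ∈ 𝒜, (-(Lhat d' A)) * Phat A|
        ≤ (𝒜.sup' h𝒜 (fun A => -(Lhat d' A)) - 𝒜.inf' h𝒜 (fun A => -(Lhat d' A))) / 2 * δ := by
    intro d'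
    set M := 𝒜.sup' h𝒜 (fun A => -(Lhat d' A)) with hM
    set m := 𝒜.inf' h𝒜 (fun A => -(Lhat d' A)) with hm
    have h0 : (∑ A ∈ 𝒜, (-(Lhat d' A)) * (P A).toReal) - ∑ A ∈ 𝒜, (-(Lhat d' A)) * Phat A
        = ∑ A ∈ 𝒜, ((-(Lhat d' A)) - (M + m)/2) * ((P A).toReal - Phat A) := by
      simp only [sub_mul, mul_sub]
      rw [Finset.sum_sub_distrib, Finset.sum_sub_distrib, Finset.sum_sub_distrib,
        ← Finset.mul_sum, ← Finset.mul_sum, hsum1, hPhatsum]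
      ring
    rw [h0]
    refine (Finset.abs_sum_le_sum_abs _ _).trans ?_
    have hb : ∀ A ∈ 𝒜, |((-(Lhat d' A)) - (M + m)/2) * ((P A).toReal - Phat A)|
        ≤ (M - m)/2 * |(P A).toReal - Phat A| := by
      intro A hA
      rw [abs_mul]
      refine mul_le_mul_of_nonneg_right ?_ (abs_nonneg _)
      have h1 : -(Lhat d' A) ≤ M := Finset.le_sup' (fun A => -(Lhat d' A)) hA
      have h2 : m ≤ -(Lhat d' A) := Finset.inf'_le (fun A => -(Lhat d' A)) hA
      rw [abs_le]
      constructor <;> [linarith; linarith]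
    refine (Finset.sum_le_sum hb).trans ?_
    rw [← Finset.mul_sum]
    exact mul_le_mul_of_nonneg_left hPP (by linarith [hRhd0 d'])
  have hRR : ∀ d' : D, (1 - 2*ε) * (sSup (Set.range fun w' => -L (d', w'))
        - sInf (Set.range fun w' => -L (d', w')))
      ≤ 𝒜.sup' h𝒜 (fun A => -(Lhat d' A)) - 𝒜.inf' h𝒜 (fun A => -(Lhat d' A)) := by
    intro d'
    set Rd' := sSup (Set.range fun w' => -L (d', w'))
      - sInf (Set.range fun w' => -L (d', w')) with hRd'
    have hsup : sSup (Set.range fun w' => -L (d', w')) ≤ 𝒜.sup' h𝒜 (fun A => -(Lhat d' A)) + Rd' * ε := by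
      apply csSup_le (Set.range_nonempty _)
      rintro x ⟨w, rfl⟩
      obtain ⟨A, hA, hw⟩ := hmemA w
      have h1 := abs_le.1 (hLsim d' A hA w hw)
      have h2 : -(Lhat d' A) ≤ 𝒜.sup' h𝒜 (fun A => -(Lhat d' A)) :=
        Finset.le_sup' (fun A => -(Lhat d' A)) hA
      rw [← hRd'] at h1
      have hb0 : (fun w' => -L (d', w')) w = -L (d', w) := rfl
      linarith [h1.1, h1.2, hb0.le, hb0.ge]
    have hinf : 𝒜.inf' h𝒜 (fun A => -(Lhat d' A)) ≤ sInf (Set.range fun w' => -L (d', w')) + Rd' * ε := by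
      have h3 : 𝒜.inf' h𝒜 (fun A => -(Lhat d' A)) - Rd' * ε ≤ sInf (Set.range fun w' => -L (d', w')) := by
        apply le_csInf (Set.range_nonempty _)
        rintro x ⟨w, rfl⟩
        obtain ⟨A, hA, hw⟩ := hmemA w
        have h1 := abs_le.1 (hLsim d' A hA w hw)
        have h2 : 𝒜.inf' h𝒜 (fun A => -(Lhat d' A)) ≤ -(Lhat d' A) :=
          Finset.inf'_le (fun A => -(Lhat d' A)) hA
        rw [← hRd'] at h1
        have hb0 : (fun w' => -L (d', w')) w = -L (d', w) := rfl
        linarith [h1.1, h1.2, hb0.le, hb0.ge]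
      linarith
    have hr : (1 - 2*ε) * Rd' = Rd' - 2 * (Rd' * ε) := by ring
    rw [hRd'] at hsup hinf ⊢
    linarith [hr]
  -- abbreviate the two sup' constants
  set R := Finset.univ.sup' Finset.univ_nonempty
    (fun d' : D => sSup (Set.range fun w => -L (d', w))
      - sInf (Set.range fun w => -L (d', w))) with hRdef
  set Rh := Finset.univ.sup' Finset.univ_nonempty
    (fun d' : D => 𝒜.sup' h𝒜 (fun A => -(Lhat d' A))
      - 𝒜.inf' h𝒜 (fun A => -(Lhat d' A))) with hRhdef
  have hRle : ∀ d' : D, sSup (Set.range fun w' => -L (d', w'))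
      - sInf (Set.range fun w' => -L (d', w')) ≤ R := by
    intro d'
    rw [hRdef]
    exact Finset.le_sup' (fun d' : D => sSup (Set.range fun w => -L (d', w))
      - sInf (Set.range fun w => -L (d', w))) (Finset.mem_univ d')
  have hRhle : ∀ d' : D, 𝒜.sup' h𝒜 (fun A => -(Lhat d' A))
      - 𝒜.inf' h𝒜 (fun A => -(Lhat d' A)) ≤ Rh := by
    intro d'
    rw [hRhdef]
    exact Finset.le_sup' (fun d' : D => 𝒜.sup' h𝒜 (fun A => -(Lhat d' A))
      - 𝒜.inf' h𝒜 (fun A => -(Lhat d' A))) (Finset.mem_univ d')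
  have hRh0 : 0 ≤ Rh := le_trans (hRhd0 d) (hRhle d)
  have hRRh : R ≤ Rh / (1 - 2*ε) := by
    rw [hRdef]
    apply Finset.sup'_le
    intro d' _
    rw [le_div_iff₀ hc]
    show (sSup (Set.range fun w => -L (d', w))
      - sInf (Set.range fun w => -L (d', w))) * (1 - 2*ε) ≤ Rh
    have h1 := hRR d'
    have h2 := hRhle d'
    have h3 : (sSup (Set.range fun w' => -L (d', w'))
        - sInf (Set.range fun w' => -L (d', w'))) * (1 - 2*ε)
      = (1 - 2*ε) * (sSup (Set.range fun w' => -L (d', w'))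
        - sInf (Set.range fun w' => -L (d', w'))) := mul_comm _ _
    linarith
  intro e
  have h1 := abs_le.1 (hIS e)
  have h2 := abs_le.1 (hIS d)
  have h3 := abs_le.1 (hST e)
  have h4 := abs_le.1 (hST d)
  have h5 := hopt e
  have hmε : ∀ d' : D, (sSup (Set.range fun w' => -L (d', w'))
      - sInf (Set.range fun w' => -L (d', w'))) * ε ≤ R * ε :=
    fun d' => mul_le_mul_of_nonneg_right (hRle d') hε0.le
  have hmδ : ∀ d' : D, (𝒜.sup' h𝒜 (fun A => -(Lhat d' A))
      - 𝒜.inf' h𝒜 (fun A => -(Lhat d' A))) / 2 * δ ≤ Rh / 2 * δ :=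
    fun d' => mul_le_mul_of_nonneg_right (by linarith [hRhle d']) hδ
  have hkey : (γ + 2*ε) * R ≤ (γ + 2*ε) * (Rh / (1 - 2*ε)) :=
    mul_le_mul_of_nonneg_left hRRh (by linarith)
  have hid : (γ / (1 - 2*ε) + 2*(ε/(1 - 2*ε) + δ)) * Rh
      = (γ + 2*ε) * (Rh/(1 - 2*ε)) + 2*δ*Rh := by
    field_simp
    ring
  have hdRh : 0 ≤ δ * Rh := mul_nonneg hδ hRh0
  linarith [hmε e, hmε d, hmδ e, hmδ d, h1.1, h1.2, h2.1, h2.2, h3.1, h3.2, h4.1, h4.2]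
end

section
/- Let Ω be a measurable space, 𝒜 a finite partition of Ω into nonempty measurable sets, D a finite nonempty set, L : D × Ω → ℝ with each f_d = −L(d,·) bounded and measurable, L̂ : D × 𝒜 → ℝ, ℳ a nonempty set of probability measures on Ω, and ℳ̂ a nonempty set of probability mass functions on 𝒜. If 0 < ε < 1/2, δ ≥ 0, L ∼_ε L̂ and ℳ ∼_δ ℳ̂, then for every γ ≥ 0: opt^γ(𝒜,D,ℳ̂,L̂) ⊆ opt^{γ(1+2ε) + 2(ε + δ(1+2ε))}(Ω,D,ℳ,L). -/
open MeasureTheory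

private lemma sum_shift_bound {ι : Type*} (s : Finset ι) (hs : s.Nonempty)
    (c p q : ι → ℝ) (δ : ℝ)
    (hsum : ∑ i ∈ s, p i = ∑ i ∈ s, q i)
    (hδ : ∑ i ∈ s, |p i - q i| ≤ δ) :
    |∑ i ∈ s, c i * p i - ∑ i ∈ s, c i * q i| ≤
      (s.sup' hs c - s.inf' hs c) * δ := by
  set m := s.inf' hs c with hm
  have key : ∑ i ∈ s, c i * p i - ∑ i ∈ s, c i * q i
      = ∑ i ∈ s, (c i - m) * (p i - q i) := by
    have : ∀ i ∈ s, (c i - m) * (p i - q i)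
        = c i * p i - c i * q i - (m * p i - m * q i) := by intro i _; ring
    rw [Finset.sum_congr rfl this, Finset.sum_sub_distrib, Finset.sum_sub_distrib,
      Finset.sum_sub_distrib, ← Finset.mul_sum, ← Finset.mul_sum, hsum]
    ring
  rw [key]
  calc |∑ i ∈ s, (c i - m) * (p i - q i)|
      ≤ ∑ i ∈ s, |(c i - m) * (p i - q i)| := Finset.abs_sum_le_sum_abs _ _
    _ ≤ ∑ i ∈ s, (s.sup' hs c - m) * |p i - q i| := by
        refine Finset.sum_le_sum fun i hi => ?_
        rw [abs_mul]
        refine mul_le_mul_of_nonneg_right ?_ (abs_nonneg _)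
        have h0 : m ≤ c i := Finset.inf'_le c hi
        have h1 : c i ≤ s.sup' hs c := Finset.le_sup' c hi
        rw [abs_of_nonneg (by linarith)]
        linarith
    _ = (s.sup' hs c - m) * ∑ i ∈ s, |p i - q i| := by rw [Finset.mul_sum]
    _ ≤ (s.sup' hs c - m) * δ := by
        refine mul_le_mul_of_nonneg_left hδ ?_
        obtain ⟨i, hi⟩ := hs
        have h1 := Finset.le_sup' c hi
        have h2 := Finset.inf'_le c hi
        linarith

private lemma sum_measure_partition {Ω : Type*} [MeasurableSpace Ω]
    (𝒜 : Finset (Set Ω))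
    (hmeas : ∀ A ∈ 𝒜, MeasurableSet A)
    (hdisj : ∀ A ∈ 𝒜, ∀ B ∈ 𝒜, A ≠ B → Disjoint A B)
    (hcover : (⋃ A ∈ 𝒜, A) = Set.univ)
    (P : Measure Ω) [IsProbabilityMeasure P] :
    ∑ A ∈ 𝒜, (P A).toReal = 1 := by
  have hpw : Set.Pairwise (↑𝒜) (Function.onFun Disjoint (id : Set Ω → Set Ω)) :=
    fun A hA B hB hAB => hdisj A hA B hB hAB
  have h1 : P (⋃ A ∈ 𝒜, A) = ∑ A ∈ 𝒜, P A := by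
    simpa using measure_biUnion_finset hpw (fun A hA => hmeas A hA)
  rw [hcover, measure_univ] at h1
  have := ENNReal.toReal_sum (s := 𝒜) (f := fun A => P A)
    (fun A _ => measure_ne_top P A)
  rw [← h1] at this
  simpa using this.symm

private lemma integral_approx {Ω : Type*} [MeasurableSpace Ω]
    (𝒜 : Finset (Set Ω))
    (hmeas : ∀ A ∈ 𝒜, MeasurableSet A)
    (hdisj : ∀ A ∈ 𝒜, ∀ B ∈ 𝒜, A ≠ B → Disjoint A B)
    (hcover : (⋃ A ∈ 𝒜, A) = Set.univ)
    (P : Measure Ω) [IsProbabilityMeasure P]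
    (φ : Ω → ℝ) (hφint : Integrable φ P)
    (ψ : Set Ω → ℝ) (C : ℝ)
    (happrox : ∀ A ∈ 𝒜, ∀ w ∈ A, |φ w - ψ A| ≤ C) :
    |(∫ w, φ w ∂P) - ∑ A ∈ 𝒜, ψ A * (P A).toReal| ≤ C := by
  have hpw : Set.Pairwise (↑𝒜) (Function.onFun Disjoint (id : Set Ω → Set Ω)) :=
    fun A hA B hB hAB => hdisj A hA B hB hAB
  have hsplit : (∫ w, φ w ∂P) = ∑ A ∈ 𝒜, ∫ w in A, φ w ∂P := by
    rw [← setIntegral_univ, ← hcover]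
    exact integral_biUnion_finset 𝒜 (fun A hA => hmeas A hA) hpw
      (fun A _ => hφint.integrableOn)
  have hterm : ∀ A ∈ 𝒜, |(∫ w in A, φ w ∂P) - ψ A * (P A).toReal|
      ≤ C * (P A).toReal := by
    intro A hA
    have hint : Integrable (fun w => φ w - ψ A) (P.restrict A) :=
      hφint.restrict.sub (integrable_const _)
    have h1 : (∫ w in A, (φ w - ψ A) ∂P)
        = (∫ w in A, φ w ∂P) - ψ A * (P A).toReal := by
      rw [integral_sub hφint.restrict (integrable_const _), setIntegral_const, smul_eq_mul,
        mul_comm, measureReal_def]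
    rw [← h1]
    have := norm_setIntegral_le_of_norm_le_const (μ := P) (s := A)
      (f := fun w => φ w - ψ A) (C := C) (measure_lt_top P A)
      (fun w hw => by simpa using happrox A hA w hw)
    simpa [measureReal_def] using this
  calc |(∫ w, φ w ∂P) - ∑ A ∈ 𝒜, ψ A * (P A).toReal|
      = |∑ A ∈ 𝒜, ((∫ w in A, φ w ∂P) - ψ A * (P A).toReal)| := by
        rw [hsplit, Finset.sum_sub_distrib]
    _ ≤ ∑ A ∈ 𝒜, |(∫ w in A, φ w ∂P) - ψ A * (P A).toReal| :=
        Finset.abs_sum_le_sum_abs _ _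
    _ ≤ ∑ A ∈ 𝒜, C * (P A).toReal := Finset.sum_le_sum hterm
    _ = C * ∑ A ∈ 𝒜, (P A).toReal := by rw [Finset.mul_sum]
    _ = C := by rw [sum_measure_partition 𝒜 hmeas hdisj hcover P, mul_one]

/-- Theorem 1, Eq. (2): if `L ∼_ε L̂` and `ℳ ∼_δ ℳ̂`, then
`opt^γ(𝒜,D,ℳ̂,L̂) ⊆ opt^{γ(1+2ε) + 2(ε + δ(1+2ε))}(Ω,D,ℳ,L)`. -/
theorem stmt_7 {Ω : Type*} [MeasurableSpace Ω] [Nonempty Ω]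
    {D : Type*} [Fintype D] [Nonempty D]
    (𝒜 : Finset (Set Ω)) (h𝒜 : 𝒜.Nonempty)
    (hne : ∀ A ∈ 𝒜, A.Nonempty)
    (hmeas : ∀ A ∈ 𝒜, MeasurableSet A)
    (hdisj : ∀ A ∈ 𝒜, ∀ B ∈ 𝒜, A ≠ B → Disjoint A B)
    (hcover : (⋃ A ∈ 𝒜, A) = Set.univ)
    (L : D × Ω → ℝ) (Lhat : D → Set Ω → ℝ)
    (hfmeas : ∀ d : D, Measurable fun w => -L (d, w))
    (hfa : ∀ d : D, BddAbove (Set.range fun w => -L (d, w)))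
    (hfb : ∀ d : D, BddBelow (Set.range fun w => -L (d, w)))
    (ℳ : Set (Measure Ω)) (hℳne : ℳ.Nonempty)
    (hℳprob : ∀ P ∈ ℳ, IsProbabilityMeasure P)
    (ℳhat : Set (Set Ω → ℝ)) (hℳhatne : ℳhat.Nonempty)
    (hℳhatprob : ∀ Phat ∈ ℳhat, (∀ A ∈ 𝒜, 0 ≤ Phat A) ∧ ∑ A ∈ 𝒜, Phat A = 1)
    (ε δ : ℝ) (hε0 : 0 < ε) (hε2 : ε < 1 / 2) (hδ : 0 ≤ δ)
    (hLsim : ∀ d : D, ∀ A ∈ 𝒜, ∀ w ∈ A,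
      |(-L (d, w)) - (-(Lhat d A))| ≤
        (sSup (Set.range fun w' => -L (d, w')) -
          sInf (Set.range fun w' => -L (d, w'))) * ε)
    (hMsim1 : ∀ P ∈ ℳ, ∃ Phat ∈ ℳhat, ∑ A ∈ 𝒜, |(P A).toReal - Phat A| ≤ δ)
    (hMsim2 : ∀ Phat ∈ ℳhat, ∃ P ∈ ℳ, ∑ A ∈ 𝒜, |(P A).toReal - Phat A| ≤ δ)
    (γ : ℝ) (hγ : 0 ≤ γ) :
    {d : D | ∃ Phat ∈ ℳhat, ∀ e : D,
        (∑ A ∈ 𝒜, (-(Lhat e A)) * Phat A) - (∑ A ∈ 𝒜, (-(Lhat d A)) * Phat A) ≤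
          γ * Finset.univ.sup' Finset.univ_nonempty
            (fun d' : D => 𝒜.sup' h𝒜 (fun A => -(Lhat d' A)) -
              𝒜.inf' h𝒜 (fun A => -(Lhat d' A)))} ⊆
    {d : D | ∃ P ∈ ℳ, ∀ e : D,
        (∫ w, (-L (e, w)) ∂P) - (∫ w, (-L (d, w)) ∂P) ≤
          (γ * (1 + 2 * ε) + 2 * (ε + δ * (1 + 2 * ε))) *
            Finset.univ.sup' Finset.univ_nonempty
              (fun d' : D => sSup (Set.range fun w => -L (d', w)) -
                sInf (Set.range fun w => -L (d', w)))} := by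
  intro d hd
  obtain ⟨Phat, hPhatM, hopt⟩ := hd
  obtain ⟨P, hPM, hPsim⟩ := hMsim2 Phat hPhatM
  haveI hPprob := hℳprob P hPM
  refine ⟨P, hPM, fun e => ?_⟩
  -- abbreviations (as plain definitions)
  set Rd : D → ℝ := fun d' : D => sSup (Set.range fun w => -L (d', w)) -
      sInf (Set.range fun w => -L (d', w)) with hRdDef
  set R : ℝ := Finset.univ.sup' Finset.univ_nonempty Rd with hRDef
  set Rhat : D → ℝ := fun d' : D => 𝒜.sup' h𝒜 (fun A => -(Lhat d' A)) -
      𝒜.inf' h𝒜 (fun A => -(Lhat d' A)) with hRhatDef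
  set Rh : ℝ := Finset.univ.sup' Finset.univ_nonempty Rhat with hRhDef
  -- basic facts
  have hRd0 : ∀ d' : D, 0 ≤ Rd d' := by
    intro d'
    obtain ⟨w⟩ := ‹Nonempty Ω›
    have h1 : -L (d', w) ≤ sSup (Set.range fun w => -L (d', w)) :=
      le_csSup (hfa d') ⟨w, rfl⟩
    have h2 : sInf (Set.range fun w => -L (d', w)) ≤ -L (d', w) :=
      csInf_le (hfb d') ⟨w, rfl⟩
    simp only [hRdDef]
    linarith
  have hRdR : ∀ d' : D, Rd d' ≤ R := fun d' => Finset.le_sup' Rd (Finset.mem_univ d')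
  have hR0 : 0 ≤ R := le_trans (hRd0 (Classical.arbitrary D)) (hRdR _)
  have h12 : (0:ℝ) ≤ 1 + 2 * ε := by linarith
  -- integrability
  have hint : ∀ d' : D, Integrable (fun w => -L (d', w)) P := by
    intro d'
    set M1 := sSup (Set.range fun w => -L (d', w)) with hM1
    set M0 := sInf (Set.range fun w => -L (d', w)) with hM0
    refine (integrable_const (max |M1| |M0|)).mono'
      ((hfmeas d').aestronglyMeasurable) (ae_of_all _ fun w => ?_)
    have h1 : -L (d', w) ≤ M1 := le_csSup (hfa d') ⟨w, rfl⟩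
    have h2 : M0 ≤ -L (d', w) := csInf_le (hfb d') ⟨w, rfl⟩
    rw [Real.norm_eq_abs, abs_le]
    constructor
    · have := neg_abs_le M0; have := le_max_right |M1| |M0|; linarith
    · have := le_abs_self M1; have := le_max_left |M1| |M0|; linarith
  -- integral approximation
  have hIa : ∀ d' : D, |(∫ w, (-L (d', w)) ∂P) -
      ∑ A ∈ 𝒜, (-(Lhat d' A)) * (P A).toReal| ≤ Rd d' * ε := by
    intro d'
    refine integral_approx 𝒜 hmeas hdisj hcover P _ (hint d')
      (fun A => -(Lhat d' A)) (Rd d' * ε) (fun A hA w hw => ?_)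
    simpa [hRdDef] using hLsim d' A hA w hw
  -- sum approximation
  have hsum1 : ∑ A ∈ 𝒜, (P A).toReal = 1 :=
    sum_measure_partition 𝒜 hmeas hdisj hcover P
  have hsum2 : ∑ A ∈ 𝒜, Phat A = 1 := (hℳhatprob Phat hPhatM).2
  have hSa : ∀ d' : D, |(∑ A ∈ 𝒜, (-(Lhat d' A)) * (P A).toReal) -
      ∑ A ∈ 𝒜, (-(Lhat d' A)) * Phat A| ≤ Rhat d' * δ := by
    intro d'
    simpa [hRhatDef] using sum_shift_bound 𝒜 h𝒜 (fun A => -(Lhat d' A))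
      (fun A => (P A).toReal) Phat δ (by rw [hsum1, hsum2]) hPsim
  -- Rhat bound
  have hRhatRd : ∀ d' : D, Rhat d' ≤ Rd d' * (1 + 2 * ε) := by
    intro d'
    have hsup : 𝒜.sup' h𝒜 (fun A => -(Lhat d' A)) ≤
        sSup (Set.range fun w => -L (d', w)) + Rd d' * ε := by
      refine Finset.sup'_le _ _ fun A hA => ?_
      obtain ⟨w, hw⟩ := hne A hA
      have h1 := abs_le.mp (hLsim d' A hA w hw)
      have h2 : -L (d', w) ≤ sSup (Set.range fun w => -L (d', w)) :=
        le_csSup (hfa d') ⟨w, rfl⟩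
      simp only [hRdDef] at h1 ⊢
      linarith [h1.1, h1.2]
    have hinf : sInf (Set.range fun w => -L (d', w)) - Rd d' * ε ≤
        𝒜.inf' h𝒜 (fun A => -(Lhat d' A)) := by
      refine Finset.le_inf' _ _ fun A hA => ?_
      obtain ⟨w, hw⟩ := hne A hA
      have h1 := abs_le.mp (hLsim d' A hA w hw)
      have h2 : sInf (Set.range fun w => -L (d', w)) ≤ -L (d', w) :=
        csInf_le (hfb d') ⟨w, rfl⟩
      simp only [hRdDef] at h1 ⊢
      linarith [h1.1, h1.2]
    simp only [hRhatDef, hRdDef] at hsup hinf ⊢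
    linarith
  have hRhR : Rh ≤ R * (1 + 2 * ε) := by
    refine Finset.sup'_le _ _ fun d' _ => (hRhatRd d').trans ?_
    exact mul_le_mul_of_nonneg_right (hRdR d') h12
  -- conclude
  have hc := hopt e
  have h1 := abs_le.mp (hIa e)
  have h2 := abs_le.mp (hIa d)
  have h3 := abs_le.mp (hSa e)
  have h4 := abs_le.mp (hSa d)
  have p1 : Rd e * ε ≤ R * ε := mul_le_mul_of_nonneg_right (hRdR e) hε0.le
  have p2 : Rd d * ε ≤ R * ε := mul_le_mul_of_nonneg_right (hRdR d) hε0.le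
  have p3 : Rhat e * δ ≤ R * (1 + 2 * ε) * δ :=
    mul_le_mul_of_nonneg_right ((hRhatRd e).trans
      (mul_le_mul_of_nonneg_right (hRdR e) h12)) hδ
  have p4 : Rhat d * δ ≤ R * (1 + 2 * ε) * δ :=
    mul_le_mul_of_nonneg_right ((hRhatRd d).trans
      (mul_le_mul_of_nonneg_right (hRdR d) h12)) hδ
  have p5 : γ * Rh ≤ γ * (R * (1 + 2 * ε)) := mul_le_mul_of_nonneg_left hRhR hγ
  have hring : (γ * (1 + 2 * ε) + 2 * (ε + δ * (1 + 2 * ε))) * R =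
      γ * (R * (1 + 2 * ε)) + 2 * (R * ε) + 2 * (R * (1 + 2 * ε) * δ) := by ring
  rw [hring]
  linarith [h1.1, h1.2, h2.1, h2.2, h3.1, h3.2, h4.1, h4.2]
end

section
/- Let Ω be a nonempty finite set, D a finite nonempty set, L : D × Ω → ℝ a loss function with f_d = −L(d,·), and suppose R_D = max_{d∈D}(max_w f_d(w) − min_w f_d(w)) > 0. Let ℳ be a nonempty set of probability vectors on Ω. Then for every ε ≥ 0: max^ε(Ω,D,closure(ℳ),L) = ⋂_{δ>0} max^{ε+δ}(Ω,D,ℳ,L), where the closure is taken in ℝ^Ω with the standard topology. -/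
/-- Expected utility of decision `d` under probability vector `p`,
for loss `L` (`f_d = -L(d,·)`). -/
def expUtil {Ω D : Type*} [Fintype Ω] (p : Ω → ℝ) (L : D → Ω → ℝ) (d : D) : ℝ :=
  ∑ w, p w * (-L d w)

/-- `R_D = max_{d∈D} (max_w f_d(w) − min_w f_d(w))`. -/
noncomputable def lossRange {Ω D : Type*} [Fintype Ω] [Nonempty Ω] [Fintype D] [Nonempty D]
    (L : D → Ω → ℝ) : ℝ :=
  Finset.univ.sup' Finset.univ_nonempty
    (fun d : D => Finset.univ.sup' Finset.univ_nonempty (fun w : Ω => -L d w) -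
      Finset.univ.inf' Finset.univ_nonempty (fun w : Ω => -L d w))

/-- The set of `ε`-maximal decisions `max^ε(Ω,D,ℳ,L)`. -/
noncomputable def maxSet {Ω D : Type*} [Fintype Ω] [Nonempty Ω] [Fintype D] [Nonempty D]
    (ε : ℝ) (ℳ : Set (Ω → ℝ)) (L : D → Ω → ℝ) : Set D :=
  {d : D | ∀ e : D, ∃ p ∈ ℳ, expUtil p L e - expUtil p L d ≤ ε * lossRange L}


lemma expUtil_sub_continuous {Ω D : Type*} [Fintype Ω] (L : D → Ω → ℝ) (e d : D) :
    Continuous fun p : Ω → ℝ => expUtil p L e - expUtil p L d := by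
  unfold expUtil
  exact (continuous_finset_sum _ fun w _ => (continuous_apply w).mul continuous_const).sub
    (continuous_finset_sum _ fun w _ => (continuous_apply w).mul continuous_const)

/-- Lemma 4, Eq. (7): `max^ε(Ω,D,closure(ℳ),L) = ⋂_{δ>0} max^{ε+δ}(Ω,D,ℳ,L)`. -/
theorem stmt_8 {Ω : Type*} [Fintype Ω] [Nonempty Ω]
    {D : Type*} [Fintype D] [Nonempty D]
    (L : D → Ω → ℝ) (hR : 0 < lossRange L)
    (ℳ : Set (Ω → ℝ)) (hℳne : ℳ.Nonempty)
    (hℳ : ∀ p ∈ ℳ, (∀ w, 0 ≤ p w) ∧ ∑ w, p w = 1)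
    (ε : ℝ) (hε : 0 ≤ ε) :
    maxSet ε (closure ℳ) L = ⋂ (δ : ℝ) (_ : 0 < δ), maxSet (ε + δ) ℳ L := by
  ext d
  simp only [Set.mem_iInter, maxSet, Set.mem_setOf_eq]
  constructor
  · intro hd δ hδ e
    obtain ⟨p, hp, hpe⟩ := hd e
    have hcont := expUtil_sub_continuous L e d
    have hopen : IsOpen {q : Ω → ℝ | expUtil q L e - expUtil q L d < (ε + δ) * lossRange L} :=
      isOpen_lt hcont continuous_const
    have hpmem : p ∈ {q : Ω → ℝ | expUtil q L e - expUtil q L d < (ε + δ) * lossRange L} := by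
      simp only [Set.mem_setOf_eq]
      nlinarith
    obtain ⟨q, hqU, hqM⟩ := mem_closure_iff.mp hp _ hopen hpmem
    exact ⟨q, hqM, le_of_lt hqU⟩
  · intro hd e
    have hseq : ∀ n : ℕ, ∃ q ∈ ℳ,
        expUtil q L e - expUtil q L d ≤ (ε + 1/(n+1)) * lossRange L := by
      intro n; exact hd (1/(n+1)) (by positivity) e
    choose q hqM hqle using hseq
    have hsub : closure ℳ ⊆ Metric.closedBall (0 : Ω → ℝ) 1 := by
      apply closure_minimal ?_ Metric.isClosed_closedBall
      intro p hp
      rw [Metric.mem_closedBall, dist_zero_right]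
      obtain ⟨h1, h2⟩ := hℳ p hp
      rw [pi_norm_le_iff_of_nonneg zero_le_one]
      intro w
      rw [Real.norm_eq_abs, abs_of_nonneg (h1 w)]
      calc p w ≤ ∑ w', p w' :=
            Finset.single_le_sum (fun w' _ => h1 w') (Finset.mem_univ w)
        _ = 1 := h2
    have hK : IsCompact (closure ℳ) :=
      (isCompact_closedBall (0 : Ω → ℝ) 1).of_isClosed_subset isClosed_closure hsub
    have hqcl : ∀ n, q n ∈ closure ℳ := fun n => subset_closure (hqM n)
    obtain ⟨p, hp, φ, hφ, htend⟩ := hK.tendsto_subseq hqcl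
    refine ⟨p, hp, ?_⟩
    have hcont := expUtil_sub_continuous L e d
    have h1 : Filter.Tendsto (fun n => expUtil (q (φ n)) L e - expUtil (q (φ n)) L d)
        Filter.atTop (nhds (expUtil p L e - expUtil p L d)) := (hcont.tendsto p).comp htend
    have h0 : Filter.Tendsto (fun n : ℕ => 1/((φ n : ℝ)+1)) Filter.atTop (nhds 0) := by
      have := (tendsto_one_div_add_atTop_nhds_zero_nat (𝕜 := ℝ)).comp hφ.tendsto_atTop
      exact this
    have h2 : Filter.Tendsto (fun n : ℕ => (ε + 1/((φ n : ℝ)+1)) * lossRange L)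
        Filter.atTop (nhds (ε * lossRange L)) := by
      have ha : Filter.Tendsto (fun n : ℕ => ε + 1/((φ n : ℝ)+1)) Filter.atTop (nhds (ε + 0)) :=
        (tendsto_const_nhds (x := ε)).add h0
      have := ha.mul (tendsto_const_nhds (x := lossRange L))
      simpa using this
    exact le_of_tendsto_of_tendsto' h1 h2 (fun n => hqle (φ n))
end

section
/- Let Ω be a nonempty finite set, D a finite nonempty set, L : D × Ω → ℝ a loss function with f_d = −L(d,·), and suppose R_D = max_{d∈D}(max_w f_d(w) − min_w f_d(w)) > 0. Let ℳ be a nonempty set of probability vectors on Ω. Then for every ε ≥ 0: opt^ε(Ω,D,closure(ℳ),L) = ⋂_{δ>0} opt^{ε+δ}(Ω,D,ℳ,L), where the closure is taken in ℝ^Ω with the standard topology. -/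
/-- The set of `ε`-optimal decisions `opt^ε(Ω,D,ℳ,L)`. -/
noncomputable def optSet {Ω D : Type*} [Fintype Ω] [Nonempty Ω] [Fintype D] [Nonempty D]
    (ε : ℝ) (ℳ : Set (Ω → ℝ)) (L : D → Ω → ℝ) : Set D :=
  {d : D | ∃ p ∈ ℳ, ∀ e : D, expUtil p L e - expUtil p L d ≤ ε * lossRange L}

/-- Lemma 4, Eq. (8): `opt^ε(Ω,D,closure(ℳ),L) = ⋂_{δ>0} opt^{ε+δ}(Ω,D,ℳ,L)`. -/
theorem stmt_9 {Ω : Type*} [Fintype Ω] [Nonempty Ω]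
    {D : Type*} [Fintype D] [Nonempty D]
    (L : D → Ω → ℝ) (hR : 0 < lossRange L)
    (ℳ : Set (Ω → ℝ)) (hℳne : ℳ.Nonempty)
    (hℳ : ∀ p ∈ ℳ, (∀ w, 0 ≤ p w) ∧ ∑ w, p w = 1)
    (ε : ℝ) (hε : 0 ≤ ε) :
    optSet ε (closure ℳ) L = ⋂ (δ : ℝ) (_ : 0 < δ), optSet (ε + δ) ℳ L := by

  have hcont : ∀ e : D, Continuous (fun p : Ω → ℝ => expUtil p L e) := fun e =>
    continuous_finset_sum _ fun w _ => (continuous_apply w).mul continuous_const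
  ext d
  simp only [Set.mem_iInter, optSet, Set.mem_setOf_eq]
  constructor
  · rintro ⟨p, hp, hpd⟩ δ hδ
    set S := {q : Ω → ℝ | ∀ e, expUtil q L e - expUtil q L d < (ε + δ) * lossRange L} with hS
    have hopen : IsOpen S := by
      have : S = ⋂ e : D, {q | expUtil q L e - expUtil q L d < (ε + δ) * lossRange L} := by
        ext; simp [hS]
      rw [this]
      exact isOpen_iInter_of_finite fun e =>
        isOpen_lt ((hcont e).sub (hcont d)) continuous_const
    have hpmem : p ∈ S := by
      intro e
      have h1 := hpd e
      have h2 : ε * lossRange L < (ε + δ) * lossRange L := by nlinarith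
      linarith
    obtain ⟨q, hq1, hq2⟩ := _root_.mem_closure_iff.mp hp _ hopen hpmem
    exact ⟨q, hq2, fun e => (hq1 e).le⟩
  · intro h
    have hchoice : ∀ n : ℕ, ∃ p ∈ ℳ, ∀ e,
        expUtil p L e - expUtil p L d ≤ (ε + 1 / (n + 1)) * lossRange L :=
      fun n => h (1 / (n + 1)) (by positivity)
    choose p hpM hple using hchoice
    have hsub : closure ℳ ⊆ Set.pi Set.univ (fun _ : Ω => Set.Icc (0:ℝ) 1) := by
      apply closure_minimal
      · intro q hq w _
        obtain ⟨hpos, hsum⟩ := hℳ q hq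
        refine ⟨hpos w, ?_⟩
        calc q w ≤ ∑ w, q w := Finset.single_le_sum (fun i _ => hpos i) (Finset.mem_univ w)
        _ = 1 := hsum
      · exact isClosed_set_pi fun w _ => isClosed_Icc
    have hcomp : IsCompact (closure ℳ) :=
      (isCompact_univ_pi fun _ => isCompact_Icc).of_isClosed_subset isClosed_closure hsub
    have hmem : ∀ n, p n ∈ closure ℳ := fun n => subset_closure (hpM n)
    obtain ⟨q, hqmem, φ, hφ, htend⟩ := hcomp.tendsto_subseq hmem
    refine ⟨q, hqmem, fun e => ?_⟩
    have h1 : Filter.Tendsto (fun n => expUtil (p (φ n)) L e - expUtil (p (φ n)) L d)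
        Filter.atTop (nhds (expUtil q L e - expUtil q L d)) :=
      (((hcont e).sub (hcont d)).continuousAt.tendsto).comp htend
    have h0 : Filter.Tendsto (fun n : ℕ => (1:ℝ) / (φ n + 1)) Filter.atTop (nhds 0) :=
      tendsto_one_div_add_atTop_nhds_zero_nat.comp hφ.tendsto_atTop
    have h2 : Filter.Tendsto (fun n => (ε + 1 / (φ n + 1)) * lossRange L)
        Filter.atTop (nhds (ε * lossRange L)) := by
      have := (Filter.Tendsto.add (tendsto_const_nhds (x := ε)) h0).mul_const (lossRange L)
      simpa using this
    exact le_of_tendsto_of_tendsto' h1 h2 (fun n => hple (φ n) e)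
end

section
/- Let Ω be a nonempty finite set, D a finite nonempty set, L : D × Ω → ℝ a loss function with f_d = −L(d,·), and suppose R_D = max_{d∈D}(max_w f_d(w) − min_w f_d(w)) > 0. Let ℳ be a nonempty set of probability vectors on Ω. Then max(Ω,D,closure(ℳ),L) = ⋂_{ε>0} max^ε(Ω,D,ℳ,L), where max denotes max^0 and the closure is taken in ℝ^Ω with the standard topology. -/
/-- Corollary 1: `max(Ω,D,closure(ℳ),L) = ⋂_{ε>0} max^ε(Ω,D,ℳ,L)`,
where `max = max^0`. -/
theorem stmt_10 {Ω : Type*} [Fintype Ω] [Nonempty Ω]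
    {D : Type*} [Fintype D] [Nonempty D]
    (L : D → Ω → ℝ) (hR : 0 < lossRange L)
    (ℳ : Set (Ω → ℝ)) (hℳne : ℳ.Nonempty)
    (hℳ : ∀ p ∈ ℳ, (∀ w, 0 ≤ p w) ∧ ∑ w, p w = 1) :
    maxSet 0 (closure ℳ) L = ⋂ (ε : ℝ) (_ : 0 < ε), maxSet ε ℳ L := by
  have hcont : ∀ d : D, Continuous fun p : Ω → ℝ => expUtil p L d := fun d =>
    continuous_finset_sum _ fun w _ => (continuous_apply w).mul continuous_const
  have hK : IsCompact (closure ℳ) := by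
    have hsub : closure ℳ ⊆ Set.pi Set.univ fun _ : Ω => Set.Icc (0:ℝ) 1 := by
      apply closure_minimal _ (isClosed_set_pi fun _ _ => isClosed_Icc)
      intro p hp w _
      obtain ⟨h0, h1⟩ := hℳ p hp
      exact ⟨h0 w, h1 ▸ Finset.single_le_sum (fun v _ => h0 v) (Finset.mem_univ w)⟩
    exact (isCompact_univ_pi fun _ => isCompact_Icc).of_isClosed_subset isClosed_closure hsub
  ext d
  simp only [Set.mem_iInter, maxSet, Set.mem_setOf_eq]
  constructor
  · intro hd ε hε e
    obtain ⟨p, hp, hpd⟩ := hd e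
    have hU : IsOpen {q : Ω → ℝ | expUtil q L e - expUtil q L d < ε * lossRange L} :=
      isOpen_lt ((hcont e).sub (hcont d)) continuous_const
    have hpU : p ∈ {q : Ω → ℝ | expUtil q L e - expUtil q L d < ε * lossRange L} := by
      have : (0:ℝ) * lossRange L = 0 := zero_mul _
      have := hpd.trans_lt (by rw [this]; positivity : (0:ℝ)*lossRange L < ε * lossRange L)
      exact this
    obtain ⟨q, hqU, hqM⟩ := _root_.mem_closure_iff.mp hp _ hU hpU
    exact ⟨q, hqM, le_of_lt hqU⟩
  · intro hd e
    have hKne : (closure ℳ).Nonempty := hℳne.closure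
    obtain ⟨p, hpK, hmin⟩ := hK.exists_isMinOn hKne
      (((hcont e).sub (hcont d)).continuousOn)
    refine ⟨p, hpK, ?_⟩
    rw [zero_mul]
    have key : ∀ δ > 0, expUtil p L e - expUtil p L d ≤ δ := by
      intro δ hδ
      obtain ⟨q, hqM, hq⟩ := hd (δ / lossRange L) (by positivity) e
      calc expUtil p L e - expUtil p L d ≤ expUtil q L e - expUtil q L d :=
            hmin (subset_closure hqM)
        _ ≤ δ / lossRange L * lossRange L := hq
        _ = δ := div_mul_cancel₀ δ (ne_of_gt hR)
    exact le_of_forall_pos_le_add fun δ hδ => (key δ hδ).trans_eq (zero_add δ).symm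
end

section
/- Let Ω be a nonempty finite set, 𝒜 a finite partition of Ω into nonempty sets, D a finite nonempty set, L : D × Ω → ℝ with f_d = −L(d,·) and R_D = max_{d∈D}(max_w f_d(w) − min_w f_d(w)) > 0, L̂ : D × 𝒜 → ℝ, ℳ a nonempty set of probability vectors on Ω, and ℳ̂ a nonempty set of probability mass functions on 𝒜. If 0 < ε < 1/2, δ ≥ 0, L ∼_ε L̂, and ext(closure(convexHull(ℳ))) ∼_δ ℳ̂ (where ext denotes the set of extreme points, and convex hull and closure are taken in ℝ^Ω), then for every γ ≥ 0: max^γ(Ω,D,ℳ,L) ⊆ ⋂_{η>0} max^{η + γ/(1−2ε) + 2(ε/(1−2ε) + δ)}(𝒜,D,ℳ̂,L̂). -/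
/-- Theorem 2, Eq. (12): if `L ∼_ε L̂` and
`ext(closure(cohull(ℳ))) ∼_δ ℳ̂`, then
`max^γ(Ω,D,ℳ,L) ⊆ ⋂_{η>0} max^{η + γ/(1−2ε) + 2(ε/(1−2ε)+δ)}(𝒜,D,ℳ̂,L̂)`. -/
theorem stmt_11 {Ω : Type*} [Fintype Ω] [Nonempty Ω]
    {D : Type*} [Fintype D] [Nonempty D]
    (𝒜 : Finset (Set Ω)) (h𝒜 : 𝒜.Nonempty)
    (hne : ∀ A ∈ 𝒜, A.Nonempty)
    (hdisj : ∀ A ∈ 𝒜, ∀ B ∈ 𝒜, A ≠ B → Disjoint A B)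
    (hcover : (⋃ A ∈ 𝒜, A) = Set.univ)
    (L : D → Ω → ℝ) (Lhat : D → Set Ω → ℝ)
    (hR : 0 < Finset.univ.sup' Finset.univ_nonempty
      (fun d : D => Finset.univ.sup' Finset.univ_nonempty (fun w : Ω => -L d w) -
        Finset.univ.inf' Finset.univ_nonempty (fun w : Ω => -L d w)))
    (ℳ : Set (Ω → ℝ)) (hℳne : ℳ.Nonempty)
    (hℳ : ∀ p ∈ ℳ, (∀ w, 0 ≤ p w) ∧ ∑ w, p w = 1)
    (ℳhat : Set (Set Ω → ℝ)) (hℳhatne : ℳhat.Nonempty)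
    (hℳhat : ∀ Phat ∈ ℳhat, (∀ A ∈ 𝒜, 0 ≤ Phat A) ∧ ∑ A ∈ 𝒜, Phat A = 1)
    (ε δ : ℝ) (hε0 : 0 < ε) (hε2 : ε < 1 / 2) (hδ : 0 ≤ δ)
    (hLsim : ∀ d : D, ∀ A ∈ 𝒜, ∀ w ∈ A,
      |(-L d w) - (-(Lhat d A))| ≤
        (Finset.univ.sup' Finset.univ_nonempty (fun w' : Ω => -L d w') -
          Finset.univ.inf' Finset.univ_nonempty (fun w' : Ω => -L d w')) * ε)
    (hMsim1 : ∀ p ∈ Set.extremePoints ℝ (closure (convexHull ℝ ℳ)),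
      ∃ Phat ∈ ℳhat, ∑ A ∈ 𝒜, |(∑ w, Set.indicator A p w) - Phat A| ≤ δ)
    (hMsim2 : ∀ Phat ∈ ℳhat,
      ∃ p ∈ Set.extremePoints ℝ (closure (convexHull ℝ ℳ)),
        ∑ A ∈ 𝒜, |(∑ w, Set.indicator A p w) - Phat A| ≤ δ)
    (γ : ℝ) (hγ : 0 ≤ γ) :
    {d : D | ∀ e : D, ∃ p ∈ ℳ,
        (∑ w, p w * (-L e w)) - (∑ w, p w * (-L d w)) ≤
          γ * Finset.univ.sup' Finset.univ_nonempty
            (fun d' : D => Finset.univ.sup' Finset.univ_nonempty (fun w : Ω => -L d' w) -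
              Finset.univ.inf' Finset.univ_nonempty (fun w : Ω => -L d' w))} ⊆
    ⋂ (η : ℝ) (_ : 0 < η),
      {d : D | ∀ e : D, ∃ Phat ∈ ℳhat,
          (∑ A ∈ 𝒜, (-(Lhat e A)) * Phat A) - (∑ A ∈ 𝒜, (-(Lhat d A)) * Phat A) ≤
            (η + γ / (1 - 2 * ε) + 2 * (ε / (1 - 2 * ε) + δ)) *
              Finset.univ.sup' Finset.univ_nonempty
                (fun d' : D => 𝒜.sup' h𝒜 (fun A => -(Lhat d' A)) -
                  𝒜.inf' h𝒜 (fun A => -(Lhat d' A)))} := by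
  classical
  set R := Finset.univ.sup' Finset.univ_nonempty
      (fun d : D => Finset.univ.sup' Finset.univ_nonempty (fun w : Ω => -L d w) -
        Finset.univ.inf' Finset.univ_nonempty (fun w : Ω => -L d w)) with hRdef
  set Rh := Finset.univ.sup' Finset.univ_nonempty
      (fun d' : D => 𝒜.sup' h𝒜 (fun A => -(Lhat d' A)) -
        𝒜.inf' h𝒜 (fun A => -(Lhat d' A))) with hRhdef
  have h2ε : 0 < 1 - 2 * ε := by linarith
  -- every point lies in a unique cell of the partition
  have hExu : ∀ w : Ω, ∃ A ∈ 𝒜, w ∈ A ∧ ∀ B ∈ 𝒜, w ∈ B → B = A := by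
    intro w
    have hw : w ∈ ⋃ A ∈ 𝒜, A := by rw [hcover]; trivial
    simp only [Set.mem_iUnion, exists_prop] at hw
    obtain ⟨A, hA, hwA⟩ := hw
    refine ⟨A, hA, hwA, fun B hB hwB => ?_⟩
    by_contra hBA
    exact Set.disjoint_left.mp (hdisj B hB A hA hBA) hwB hwA
  -- summing indicator sums over the partition gives the full sum
  have hpart : ∀ g : Ω → ℝ, ∑ A ∈ 𝒜, ∑ w, Set.indicator A g w = ∑ w, g w := by
    intro g
    rw [Finset.sum_comm]
    refine Finset.sum_congr rfl fun w _ => ?_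
    obtain ⟨A0, hA0, hwA0, huniq⟩ := hExu w
    rw [Finset.sum_eq_single A0]
    · exact Set.indicator_of_mem hwA0 g
    · intro B hB hBA
      exact Set.indicator_of_notMem (fun hwB => hBA (huniq B hB hwB)) g
    · intro h; exact absurd hA0 h
  -- closeness of losses, uniform version
  have hfclose : ∀ d : D, ∀ A ∈ 𝒜, ∀ w ∈ A, |(-L d w) - (-(Lhat d A))| ≤ R * ε := by
    intro d A hA w hw
    refine (hLsim d A hA w hw).trans ?_
    have hrd : Finset.univ.sup' Finset.univ_nonempty (fun w' : Ω => -L d w') -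
        Finset.univ.inf' Finset.univ_nonempty (fun w' : Ω => -L d w') ≤ R := by
      rw [hRdef]
      exact Finset.le_sup' (fun d : D => Finset.univ.sup' Finset.univ_nonempty
        (fun w : Ω => -L d w) - Finset.univ.inf' Finset.univ_nonempty (fun w : Ω => -L d w))
        (Finset.mem_univ d)
    exact mul_le_mul_of_nonneg_right hrd hε0.le
  -- hat-range bound
  have hhatle : ∀ d : D, ∀ A ∈ 𝒜,
      (-(Lhat d A)) - 𝒜.inf' h𝒜 (fun A => -(Lhat d A)) ≤ Rh := by
    intro d A hA
    have h1 : -(Lhat d A) ≤ 𝒜.sup' h𝒜 (fun A => -(Lhat d A)) :=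
      Finset.le_sup' (fun A => -(Lhat d A)) hA
    have h2 : 𝒜.sup' h𝒜 (fun A => -(Lhat d A)) - 𝒜.inf' h𝒜 (fun A => -(Lhat d A)) ≤ Rh := by
      rw [hRhdef]
      exact Finset.le_sup' (fun d' : D => 𝒜.sup' h𝒜 (fun A => -(Lhat d' A)) -
        𝒜.inf' h𝒜 (fun A => -(Lhat d' A))) (Finset.mem_univ d)
    have h3 : 𝒜.inf' h𝒜 (fun A => -(Lhat d A)) ≤ 𝒜.inf' h𝒜 (fun A => -(Lhat d A)) := le_rfl
    linarith
  have hhatge : ∀ d : D, ∀ A ∈ 𝒜, 0 ≤ (-(Lhat d A)) - 𝒜.inf' h𝒜 (fun A => -(Lhat d A)) := by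
    intro d A hA
    have := Finset.inf'_le (fun A => -(Lhat d A)) hA
    linarith
  -- relation between the two ranges
  have hRRh : (1 - 2 * ε) * R ≤ Rh := by
    obtain ⟨d0, -, hd0⟩ := Finset.exists_mem_eq_sup' (Finset.univ_nonempty (α := D))
      (fun d : D => Finset.univ.sup' Finset.univ_nonempty (fun w : Ω => -L d w) -
        Finset.univ.inf' Finset.univ_nonempty (fun w : Ω => -L d w))
    rw [← hRdef] at hd0
    obtain ⟨wM, -, hwM⟩ := Finset.exists_mem_eq_sup' (Finset.univ_nonempty (α := Ω))
      (fun w : Ω => -L d0 w)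
    obtain ⟨wm, -, hwm⟩ := Finset.exists_mem_eq_inf' (Finset.univ_nonempty (α := Ω))
      (fun w : Ω => -L d0 w)
    obtain ⟨AM, hAM, hwAM, -⟩ := hExu wM
    obtain ⟨Am, hAm, hwAm, -⟩ := hExu wm
    have h1 := abs_le.mp (hfclose d0 AM hAM wM hwAM)
    have h2 := abs_le.mp (hfclose d0 Am hAm wm hwAm)
    have h3 : -(Lhat d0 AM) ≤ 𝒜.sup' h𝒜 (fun A => -(Lhat d0 A)) :=
      Finset.le_sup' (fun A => -(Lhat d0 A)) hAM
    have h4 : 𝒜.inf' h𝒜 (fun A => -(Lhat d0 A)) ≤ -(Lhat d0 Am) :=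
      Finset.inf'_le (fun A => -(Lhat d0 A)) hAm
    have h5 : 𝒜.sup' h𝒜 (fun A => -(Lhat d0 A)) - 𝒜.inf' h𝒜 (fun A => -(Lhat d0 A)) ≤ Rh := by
      rw [hRhdef]
      exact Finset.le_sup' (fun d' : D => 𝒜.sup' h𝒜 (fun A => -(Lhat d' A)) -
        𝒜.inf' h𝒜 (fun A => -(Lhat d' A))) (Finset.mem_univ d0)
    rw [hwM, hwm] at hd0
    linarith [h1.1, h1.2, h2.1, h2.2]
  have hRh0 : 0 < Rh := lt_of_lt_of_le (by nlinarith) hRRh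
  -- the probability simplex
  set S : Set (Ω → ℝ) := {x | (∀ w, 0 ≤ x w) ∧ ∑ w, x w = 1} with hSdef
  have hSconv : Convex ℝ S := by
    intro x hx y hy a b ha hb hab
    constructor
    · intro w
      have h1 := hx.1 w
      have h2 := hy.1 w
      simp only [Pi.add_apply, Pi.smul_apply, smul_eq_mul]
      nlinarith
    · simp only [Pi.add_apply, Pi.smul_apply, smul_eq_mul, Finset.sum_add_distrib,
        ← Finset.mul_sum, hx.2, hy.2, mul_one]
      exact hab
  have hSclosed : IsClosed S := by
    have hrw : S = (⋂ w : Ω, {x : Ω → ℝ | 0 ≤ x w}) ∩ {x : Ω → ℝ | ∑ w, x w = 1} := by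
      ext x
      simp [hSdef, Set.mem_iInter]
    rw [hrw]
    exact (isClosed_iInter fun w => isClosed_le continuous_const (continuous_apply w)).inter
      (isClosed_eq (continuous_finset_sum _ fun w _ => continuous_apply w) continuous_const)
  have hScomp : IsCompact S := by
    have hsub : S ⊆ Set.univ.pi (fun _ : Ω => Set.Icc (0 : ℝ) 1) := by
      intro x hx w _
      refine ⟨hx.1 w, ?_⟩
      have h1 := Finset.single_le_sum (f := x) (fun i _ => hx.1 i) (Finset.mem_univ w)
      rw [hx.2] at h1
      exact h1
    exact IsCompact.of_isClosed_subset (isCompact_univ_pi fun _ => isCompact_Icc) hSclosed hsub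
  have hMS : ℳ ⊆ S := fun p hp => ⟨(hℳ p hp).1, (hℳ p hp).2⟩
  set K := closure (convexHull ℝ ℳ) with hKdef
  have hKS : K ⊆ S := closure_minimal (convexHull_min hMS hSconv) hSclosed
  have hKcomp : IsCompact K := IsCompact.of_isClosed_subset hScomp isClosed_closure hKS
  have hKconv : Convex ℝ K := (convex_convexHull ℝ ℳ).closure
  have hKM := closure_convexHull_extremePoints hKcomp hKconv
  -- the comparison lemma: expectations w.r.t. matched measures are close
  have hcomp : ∀ q ∈ S, ∀ Phat : Set Ω → ℝ,
      (∑ A ∈ 𝒜, |(∑ w, Set.indicator A q w) - Phat A| ≤ δ) → (∑ A ∈ 𝒜, Phat A = 1) →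
      ∀ d : D, |(∑ w, q w * (-L d w)) - ∑ A ∈ 𝒜, (-(Lhat d A)) * Phat A| ≤ R * ε + δ * Rh := by
    intro q hq Phat hTV hPsum d
    set c := 𝒜.inf' h𝒜 (fun A => -(Lhat d A)) with hcdef
    set qA : Set Ω → ℝ := fun A => ∑ w, Set.indicator A q w with hqAdef
    have hq1 : ∑ A ∈ 𝒜, qA A = 1 := by
      rw [hqAdef]
      simp only
      rw [hpart q, hq.2]
    -- decomposition of the first expectation
    have hdec : ∑ w, q w * (-L d w)
        = ∑ A ∈ 𝒜, ∑ w, Set.indicator A (fun w => q w * (-L d w)) w := (hpart _).symm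
    have key1 : ∀ A ∈ 𝒜, (∑ w, Set.indicator A (fun w => q w * (-L d w)) w)
        = (∑ w, Set.indicator A (fun w => q w * ((-L d w) - (-(Lhat d A)))) w)
          + (-(Lhat d A)) * qA A := by
      intro A hA
      rw [hqAdef]
      simp only
      rw [Finset.mul_sum, ← Finset.sum_add_distrib]
      refine Finset.sum_congr rfl fun w _ => ?_
      by_cases hw : w ∈ A
      · simp only [Set.indicator_of_mem hw]
        ring
      · simp [Set.indicator_of_notMem hw]
    have e2 : (∑ A ∈ 𝒜, (-(Lhat d A)) * qA A) - ∑ A ∈ 𝒜, (-(Lhat d A)) * Phat A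
        = ∑ A ∈ 𝒜, ((-(Lhat d A)) - c) * (qA A - Phat A) := by
      have hcong : ∀ A ∈ 𝒜, ((-(Lhat d A)) - c) * (qA A - Phat A)
          = ((-(Lhat d A)) * qA A - (-(Lhat d A)) * Phat A) - (c * qA A - c * Phat A) :=
        fun A _ => by ring
      rw [Finset.sum_congr rfl hcong, Finset.sum_sub_distrib, Finset.sum_sub_distrib,
        Finset.sum_sub_distrib, ← Finset.mul_sum, ← Finset.mul_sum, hq1, hPsum]
      ring
    have heq : (∑ w, q w * (-L d w)) - ∑ A ∈ 𝒜, (-(Lhat d A)) * Phat A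
        = (∑ A ∈ 𝒜, ∑ w, Set.indicator A (fun w => q w * ((-L d w) - (-(Lhat d A)))) w)
          + ∑ A ∈ 𝒜, ((-(Lhat d A)) - c) * (qA A - Phat A) := by
      rw [hdec, Finset.sum_congr rfl key1, Finset.sum_add_distrib, ← e2]
      ring
    have bound1 : ∀ A ∈ 𝒜,
        |∑ w, Set.indicator A (fun w => q w * ((-L d w) - (-(Lhat d A)))) w| ≤ (R * ε) * qA A := by
      intro A hA
      refine (Finset.abs_sum_le_sum_abs _ _).trans ?_
      rw [hqAdef]
      simp only
      rw [Finset.mul_sum]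
      refine Finset.sum_le_sum fun w _ => ?_
      by_cases hw : w ∈ A
      · simp only [Set.indicator_of_mem hw]
        rw [abs_mul, abs_of_nonneg (hq.1 w)]
        calc q w * |(-L d w) - (-(Lhat d A))| ≤ q w * (R * ε) :=
              mul_le_mul_of_nonneg_left (hfclose d A hA w hw) (hq.1 w)
          _ = R * ε * q w := by ring
      · simp [Set.indicator_of_notMem hw]
    have bound2 : ∀ A ∈ 𝒜,
        |((-(Lhat d A)) - c) * (qA A - Phat A)| ≤ Rh * |qA A - Phat A| := by
      intro A hA
      rw [abs_mul, abs_of_nonneg (hhatge d A hA)]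
      exact mul_le_mul_of_nonneg_right (hhatle d A hA) (abs_nonneg _)
    rw [heq]
    calc |(∑ A ∈ 𝒜, ∑ w, Set.indicator A (fun w => q w * ((-L d w) - (-(Lhat d A)))) w)
          + ∑ A ∈ 𝒜, ((-(Lhat d A)) - c) * (qA A - Phat A)|
        ≤ |∑ A ∈ 𝒜, ∑ w, Set.indicator A (fun w => q w * ((-L d w) - (-(Lhat d A)))) w|
          + |∑ A ∈ 𝒜, ((-(Lhat d A)) - c) * (qA A - Phat A)| := abs_add_le _ _
      _ ≤ (∑ A ∈ 𝒜, (R * ε) * qA A) + ∑ A ∈ 𝒜, Rh * |qA A - Phat A| := by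
          refine add_le_add ?_ ?_
          · exact (Finset.abs_sum_le_sum_abs _ _).trans (Finset.sum_le_sum bound1)
          · exact (Finset.abs_sum_le_sum_abs _ _).trans (Finset.sum_le_sum bound2)
      _ ≤ R * ε + δ * Rh := by
          rw [← Finset.mul_sum, ← Finset.mul_sum, hq1, mul_one]
          have := mul_le_mul_of_nonneg_left hTV hRh0.le
          linarith
  -- extreme point selection via Krein–Milman
  have hext : ∀ p ∈ ℳ, ∀ (g : Ω → ℝ) (t : ℝ), 0 < t →
      ∃ q ∈ Set.extremePoints ℝ K, (∑ w, q w * g w) ≤ (∑ w, p w * g w) + t := by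
    intro p hp g t ht
    by_contra hcon
    push_neg at hcon
    set H : Set (Ω → ℝ) := {x | (∑ w, p w * g w) + t ≤ ∑ w, x w * g w} with hHdef
    have hHconv : Convex ℝ H := by
      intro x hx y hy a b ha hb hab
      simp only [hHdef, Set.mem_setOf_eq] at hx hy ⊢
      have hxy : ∑ w, (a • x + b • y) w * g w
          = a * ∑ w, x w * g w + b * ∑ w, y w * g w := by
        simp only [Pi.add_apply, Pi.smul_apply, smul_eq_mul, Finset.mul_sum,
          ← Finset.sum_add_distrib]
        exact Finset.sum_congr rfl fun w _ => by ring
      rw [hxy]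
      have h1 := mul_le_mul_of_nonneg_left hx ha
      have h2 := mul_le_mul_of_nonneg_left hy hb
      have h3 : a * (∑ w, p w * g w + t) + b * (∑ w, p w * g w + t)
          = ∑ w, p w * g w + t := by rw [← add_mul, hab, one_mul]
      linarith
    have hHclosed : IsClosed H :=
      isClosed_le continuous_const
        (continuous_finset_sum _ fun w _ => (continuous_apply w).mul continuous_const)
    have hsub : Set.extremePoints ℝ K ⊆ H := fun q hq => le_of_lt (hcon q hq)
    have hKH : K ⊆ H := by
      rw [← hKM]
      exact closure_minimal (convexHull_min hsub hHconv) hHclosed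
    have hpH : p ∈ H := hKH (subset_closure (subset_convexHull ℝ ℳ hp))
    simp only [hHdef, Set.mem_setOf_eq] at hpH
    linarith
  -- main argument
  intro d hd
  simp only [Set.mem_setOf_eq] at hd
  simp only [Set.mem_iInter, Set.mem_setOf_eq]
  intro η hη e
  obtain ⟨p, hp, hpineq⟩ := hd e
  obtain ⟨q, hq, hqineq⟩ := hext p hp (fun w => (-L e w) - (-L d w)) (η * Rh)
    (mul_pos hη hRh0)
  obtain ⟨Phat, hPhat, hTV⟩ := hMsim1 q hq
  have hqS : q ∈ S := hKS (extremePoints_subset hq)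
  have hc1 := abs_le.mp (hcomp q hqS Phat hTV (hℳhat Phat hPhat).2 d)
  have hc2 := abs_le.mp (hcomp q hqS Phat hTV (hℳhat Phat hPhat).2 e)
  refine ⟨Phat, hPhat, ?_⟩
  have hsplit : ∀ x : Ω → ℝ, ∑ w, x w * ((-L e w) - (-L d w))
      = (∑ w, x w * (-L e w)) - (∑ w, x w * (-L d w)) := by
    intro x
    rw [← Finset.sum_sub_distrib]
    exact Finset.sum_congr rfl fun w _ => by ring
  rw [hsplit q, hsplit p] at hqineq
  -- arithmetic
  have t1 : γ * R ≤ γ / (1 - 2 * ε) * Rh := by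
    rw [div_mul_eq_mul_div, le_div_iff₀ h2ε]
    nlinarith [mul_le_mul_of_nonneg_left hRRh hγ]
  have t2 : 2 * (R * ε) ≤ 2 * (ε / (1 - 2 * ε)) * Rh := by
    rw [mul_assoc, div_mul_eq_mul_div, ← mul_div_assoc, le_div_iff₀ h2ε]
    nlinarith [mul_le_mul_of_nonneg_left hRRh hε0.le]
  have hexpand : (η + γ / (1 - 2 * ε) + 2 * (ε / (1 - 2 * ε) + δ)) * Rh
      = η * Rh + γ / (1 - 2 * ε) * Rh + 2 * (ε / (1 - 2 * ε)) * Rh + 2 * δ * Rh := by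
    ring
  rw [hexpand]
  linarith [hc1.1, hc1.2, hc2.1, hc2.2]
end

section
/- Let Ω be a nonempty finite set, 𝒜 a finite partition of Ω into nonempty sets, D a finite nonempty set, L : D × Ω → ℝ with f_d = −L(d,·) and R_D = max_{d∈D}(max_w f_d(w) − min_w f_d(w)) > 0, L̂ : D × 𝒜 → ℝ, ℳ a nonempty set of probability vectors on Ω, and ℳ̂ a nonempty set of probability mass functions on 𝒜. If 0 < ε < 1/2, δ ≥ 0, L ∼_ε L̂, and ext(closure(convexHull(ℳ))) ∼_δ ℳ̂ (where ext denotes the set of extreme points, and convex hull and closure are taken in ℝ^Ω), then for every γ ≥ 0: max^γ(𝒜,D,ℳ̂,L̂) ⊆ ⋂_{η>0} max^{η + γ(1+2ε) + 2(ε + δ(1+2ε))}(Ω,D,ℳ,L). -/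
open Finset

/-- The linear map `q ↦ ∑ w, q w * c w`. -/
noncomputable def dotLin {Ω : Type*} [Fintype Ω] (c : Ω → ℝ) : (Ω → ℝ) →ₗ[ℝ] ℝ where
  toFun q := ∑ w, q w * c w
  map_add' x y := by simp [add_mul, Finset.sum_add_distrib]
  map_smul' a x := by simp [Finset.mul_sum, mul_assoc]

/-- Theorem 2, Eq. (13): if `L ∼_ε L̂` and
`ext(closure(cohull(ℳ))) ∼_δ ℳ̂`, then
`max^γ(𝒜,D,ℳ̂,L̂) ⊆ ⋂_{η>0} max^{η + γ(1+2ε) + 2(ε + δ(1+2ε))}(Ω,D,ℳ,L)`. -/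
theorem stmt_12 {Ω : Type*} [Fintype Ω] [Nonempty Ω]
    {D : Type*} [Fintype D] [Nonempty D]
    (𝒜 : Finset (Set Ω)) (h𝒜 : 𝒜.Nonempty)
    (hne : ∀ A ∈ 𝒜, A.Nonempty)
    (hdisj : ∀ A ∈ 𝒜, ∀ B ∈ 𝒜, A ≠ B → Disjoint A B)
    (hcover : (⋃ A ∈ 𝒜, A) = Set.univ)
    (L : D → Ω → ℝ) (Lhat : D → Set Ω → ℝ)
    (hR : 0 < Finset.univ.sup' Finset.univ_nonempty
      (fun d : D => Finset.univ.sup' Finset.univ_nonempty (fun w : Ω => -L d w) -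
        Finset.univ.inf' Finset.univ_nonempty (fun w : Ω => -L d w)))
    (ℳ : Set (Ω → ℝ)) (hℳne : ℳ.Nonempty)
    (hℳ : ∀ p ∈ ℳ, (∀ w, 0 ≤ p w) ∧ ∑ w, p w = 1)
    (ℳhat : Set (Set Ω → ℝ)) (hℳhatne : ℳhat.Nonempty)
    (hℳhat : ∀ Phat ∈ ℳhat, (∀ A ∈ 𝒜, 0 ≤ Phat A) ∧ ∑ A ∈ 𝒜, Phat A = 1)
    (ε δ : ℝ) (hε0 : 0 < ε) (hε2 : ε < 1 / 2) (hδ : 0 ≤ δ)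
    (hLsim : ∀ d : D, ∀ A ∈ 𝒜, ∀ w ∈ A,
      |(-L d w) - (-(Lhat d A))| ≤
        (Finset.univ.sup' Finset.univ_nonempty (fun w' : Ω => -L d w') -
          Finset.univ.inf' Finset.univ_nonempty (fun w' : Ω => -L d w')) * ε)
    (hMsim1 : ∀ p ∈ Set.extremePoints ℝ (closure (convexHull ℝ ℳ)),
      ∃ Phat ∈ ℳhat, ∑ A ∈ 𝒜, |(∑ w, Set.indicator A p w) - Phat A| ≤ δ)
    (hMsim2 : ∀ Phat ∈ ℳhat,
      ∃ p ∈ Set.extremePoints ℝ (closure (convexHull ℝ ℳ)),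
        ∑ A ∈ 𝒜, |(∑ w, Set.indicator A p w) - Phat A| ≤ δ)
    (γ : ℝ) (hγ : 0 ≤ γ) :
    {d : D | ∀ e : D, ∃ Phat ∈ ℳhat,
        (∑ A ∈ 𝒜, (-(Lhat e A)) * Phat A) - (∑ A ∈ 𝒜, (-(Lhat d A)) * Phat A) ≤
          γ * Finset.univ.sup' Finset.univ_nonempty
            (fun d' : D => 𝒜.sup' h𝒜 (fun A => -(Lhat d' A)) -
              𝒜.inf' h𝒜 (fun A => -(Lhat d' A)))} ⊆
    ⋂ (η : ℝ) (_ : 0 < η),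
      {d : D | ∀ e : D, ∃ p ∈ ℳ,
          (∑ w, p w * (-L e w)) - (∑ w, p w * (-L d w)) ≤
            (η + γ * (1 + 2 * ε) + 2 * (ε + δ * (1 + 2 * ε))) *
              Finset.univ.sup' Finset.univ_nonempty
                (fun d' : D => Finset.univ.sup' Finset.univ_nonempty (fun w : Ω => -L d' w) -
                  Finset.univ.inf' Finset.univ_nonempty (fun w : Ω => -L d' w))} := by
  classical
  set R := Finset.univ.sup' Finset.univ_nonempty
      (fun d : D => Finset.univ.sup' Finset.univ_nonempty (fun w : Ω => -L d w) -
        Finset.univ.inf' Finset.univ_nonempty (fun w : Ω => -L d w)) with hRdef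
  have hR0 : (0:ℝ) ≤ R := le_of_lt hR
  have hRd_le : ∀ d : D,
      Finset.univ.sup' Finset.univ_nonempty (fun w : Ω => -L d w) -
        Finset.univ.inf' Finset.univ_nonempty (fun w : Ω => -L d w) ≤ R := by
    intro d; rw [hRdef]
    exact Finset.le_sup' (fun d : D => Finset.univ.sup' Finset.univ_nonempty (fun w : Ω => -L d w) -
        Finset.univ.inf' Finset.univ_nonempty (fun w : Ω => -L d w)) (Finset.mem_univ d)
  have hfle : ∀ (d : D) (w : Ω), -L d w ≤ Finset.univ.sup' Finset.univ_nonempty (fun w : Ω => -L d w) :=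
    fun d w => Finset.le_sup' (fun w : Ω => -L d w) (Finset.mem_univ w)
  have hfge : ∀ (d : D) (w : Ω), Finset.univ.inf' Finset.univ_nonempty (fun w : Ω => -L d w) ≤ -L d w :=
    fun d w => Finset.inf'_le (fun w : Ω => -L d w) (Finset.mem_univ w)
  have hRd0 : ∀ d : D, (0:ℝ) ≤
      Finset.univ.sup' Finset.univ_nonempty (fun w : Ω => -L d w) -
        Finset.univ.inf' Finset.univ_nonempty (fun w : Ω => -L d w) := by
    intro d
    obtain ⟨w⟩ := ‹Nonempty Ω›
    have := hfge d w; have := hfle d w; linarith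
  -- finset version of the cells
  set tF : Set Ω → Finset Ω := fun A => Finset.univ.filter (fun w => w ∈ A) with htFdef
  have htF : ∀ (A : Set Ω) (w : Ω), w ∈ tF A ↔ w ∈ A := by
    intro A w; simp [htFdef]
  have hcovF : 𝒜.biUnion tF = Finset.univ := by
    ext w
    simp only [Finset.mem_biUnion, Finset.mem_univ, iff_true]
    have hw : w ∈ ⋃ A ∈ 𝒜, A := by rw [hcover]; trivial
    obtain ⟨A, hA, hwA⟩ := Set.mem_iUnion₂.mp hw
    exact ⟨A, hA, (htF A w).mpr hwA⟩
  have hPD : (↑𝒜 : Set (Set Ω)).PairwiseDisjoint tF := by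
    intro A hA B hB hAB
    have hd := hdisj A hA B hB hAB
    refine Finset.disjoint_left.mpr ?_
    intro w hwA hwB
    exact Set.disjoint_left.mp hd ((htF A w).mp hwA) ((htF B w).mp hwB)
  have hsplit : ∀ g : Ω → ℝ, ∑ w, g w = ∑ A ∈ 𝒜, ∑ w ∈ tF A, g w := by
    intro g; rw [← hcovF, Finset.sum_biUnion hPD]
  have hind : ∀ (A : Set Ω) (p : Ω → ℝ), ∑ w, Set.indicator A p w = ∑ w ∈ tF A, p w := by
    intro A p
    rw [htFdef, Finset.sum_filter]
    exact Finset.sum_congr rfl fun w _ => Set.indicator_apply A p w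
  -- Rhat bound
  have hRhatd : ∀ d : D,
      𝒜.sup' h𝒜 (fun A => -(Lhat d A)) - 𝒜.inf' h𝒜 (fun A => -(Lhat d A)) ≤ (1 + 2*ε) * R := by
    intro d
    obtain ⟨A, hA, hAs⟩ := Finset.exists_mem_eq_sup' h𝒜 (fun A => -(Lhat d A))
    obtain ⟨B, hB, hBs⟩ := Finset.exists_mem_eq_inf' h𝒜 (fun A => -(Lhat d A))
    obtain ⟨w, hw⟩ := hne A hA
    obtain ⟨v, hv⟩ := hne B hB
    have h1 := abs_le.mp (hLsim d A hA w hw)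
    have h2 := abs_le.mp (hLsim d B hB v hv)
    have hw1 := hfle d w
    have hv1 := hfge d v
    have hRd := hRd_le d
    have hRdnn := hRd0 d
    rw [hAs, hBs]
    nlinarith [mul_le_mul_of_nonneg_right hRd (le_of_lt hε0)]
  -- key approximation lemma
  have key : ∀ (d : D) (p : Ω → ℝ), (∀ w, 0 ≤ p w) → (∑ w, p w = 1) →
      ∀ Q : Set Ω → ℝ, (∑ A ∈ 𝒜, Q A = 1) →
      (∑ A ∈ 𝒜, |(∑ w ∈ tF A, p w) - Q A| ≤ δ) →
      |(∑ w, p w * (-L d w)) - ∑ A ∈ 𝒜, (-(Lhat d A)) * Q A| ≤ (ε + δ * (1 + 2*ε)) * R := by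
    intro d p hp0 hp1 Q hQ1 hQδ
    set G : Set Ω → ℝ := fun A => -(Lhat d A) with hGdef
    have e1 : ∑ w, p w * (-L d w) = ∑ A ∈ 𝒜, ∑ w ∈ tF A, p w * (-L d w) := hsplit _
    have e2 : ∑ A ∈ 𝒜, ∑ w ∈ tF A, p w = 1 := by rw [← hsplit p]; exact hp1
    set Rd := Finset.univ.sup' Finset.univ_nonempty (fun w : Ω => -L d w) -
        Finset.univ.inf' Finset.univ_nonempty (fun w : Ω => -L d w) with hRddef
    -- step 2
    have s2 : |(∑ A ∈ 𝒜, ∑ w ∈ tF A, p w * (-L d w)) - ∑ A ∈ 𝒜, (∑ w ∈ tF A, p w) * G A|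
        ≤ ε * R := by
      have heq : (∑ A ∈ 𝒜, ∑ w ∈ tF A, p w * (-L d w)) - ∑ A ∈ 𝒜, (∑ w ∈ tF A, p w) * G A
          = ∑ A ∈ 𝒜, ∑ w ∈ tF A, p w * ((-L d w) - G A) := by
        rw [← Finset.sum_sub_distrib]
        refine Finset.sum_congr rfl fun A _ => ?_
        rw [Finset.sum_mul, ← Finset.sum_sub_distrib]
        exact Finset.sum_congr rfl fun w _ => by ring
      rw [heq]
      calc |∑ A ∈ 𝒜, ∑ w ∈ tF A, p w * ((-L d w) - G A)|
          ≤ ∑ A ∈ 𝒜, |∑ w ∈ tF A, p w * ((-L d w) - G A)| := Finset.abs_sum_le_sum_abs _ _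
        _ ≤ ∑ A ∈ 𝒜, ∑ w ∈ tF A, p w * (Rd * ε) := by
            refine Finset.sum_le_sum fun A hA => ?_
            refine le_trans (Finset.abs_sum_le_sum_abs _ _) (Finset.sum_le_sum fun w hw => ?_)
            rw [abs_mul, abs_of_nonneg (hp0 w)]
            exact mul_le_mul_of_nonneg_left (hLsim d A hA w ((htF A w).mp hw)) (hp0 w)
        _ = (∑ A ∈ 𝒜, ∑ w ∈ tF A, p w) * (Rd * ε) := by
            rw [Finset.sum_mul]
            exact Finset.sum_congr rfl fun A _ => (Finset.sum_mul _ _ _).symm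
        _ = Rd * ε := by rw [e2, one_mul]
        _ ≤ ε * R := by
            rw [mul_comm]
            exact mul_le_mul_of_nonneg_left (hRd_le d) (le_of_lt hε0)
    -- step 3
    have h𝒜' := h𝒜
    obtain ⟨A0, hA0⟩ := h𝒜'
    have hGbd : ∀ A ∈ 𝒜, |G A - G A0| ≤ (1 + 2*ε) * R := by
      intro A hA
      have h1 : G A ≤ 𝒜.sup' h𝒜 G := Finset.le_sup' _ hA
      have h2 : 𝒜.inf' h𝒜 G ≤ G A0 := Finset.inf'_le _ hA0
      have h3 : G A0 ≤ 𝒜.sup' h𝒜 G := Finset.le_sup' _ hA0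
      have h4 : 𝒜.inf' h𝒜 G ≤ G A := Finset.inf'_le _ hA
      have h5 := hRhatd d
      rw [← hGdef] at h5
      exact abs_le.mpr ⟨by linarith, by linarith⟩
    have s3 : |(∑ A ∈ 𝒜, (∑ w ∈ tF A, p w) * G A) - ∑ A ∈ 𝒜, G A * Q A|
        ≤ δ * ((1 + 2*ε) * R) := by
      have heq : (∑ A ∈ 𝒜, (∑ w ∈ tF A, p w) * G A) - ∑ A ∈ 𝒜, G A * Q A
          = ∑ A ∈ 𝒜, ((∑ w ∈ tF A, p w) - Q A) * (G A - G A0) := by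
        have expand : ∑ A ∈ 𝒜, ((∑ w ∈ tF A, p w) - Q A) * (G A - G A0)
            = (∑ A ∈ 𝒜, ((∑ w ∈ tF A, p w) * G A - G A * Q A))
              - (∑ A ∈ 𝒜, ((∑ w ∈ tF A, p w) * G A0 - Q A * G A0)) := by
          rw [← Finset.sum_sub_distrib]
          exact Finset.sum_congr rfl fun A _ => by ring
        rw [expand, Finset.sum_sub_distrib, Finset.sum_sub_distrib,
          ← Finset.sum_mul, ← Finset.sum_mul, e2, hQ1]
        ring
      rw [heq]
      calc |∑ A ∈ 𝒜, ((∑ w ∈ tF A, p w) - Q A) * (G A - G A0)|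
          ≤ ∑ A ∈ 𝒜, |((∑ w ∈ tF A, p w) - Q A) * (G A - G A0)| := Finset.abs_sum_le_sum_abs _ _
        _ ≤ ∑ A ∈ 𝒜, |(∑ w ∈ tF A, p w) - Q A| * ((1 + 2*ε) * R) := by
            refine Finset.sum_le_sum fun A hA => ?_
            rw [abs_mul]
            exact mul_le_mul_of_nonneg_left (hGbd A hA) (abs_nonneg _)
        _ = (∑ A ∈ 𝒜, |(∑ w ∈ tF A, p w) - Q A|) * ((1 + 2*ε) * R) := (Finset.sum_mul _ _ _).symm
        _ ≤ δ * ((1 + 2*ε) * R) := by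
            refine mul_le_mul_of_nonneg_right hQδ ?_
            have : (0:ℝ) ≤ 1 + 2*ε := by linarith
            exact mul_nonneg this hR0
    -- combine
    have hGQ : ∑ A ∈ 𝒜, (-(Lhat d A)) * Q A = ∑ A ∈ 𝒜, G A * Q A := rfl
    rw [e1, hGQ]
    calc |(∑ A ∈ 𝒜, ∑ w ∈ tF A, p w * (-L d w)) - ∑ A ∈ 𝒜, G A * Q A|
        = |((∑ A ∈ 𝒜, ∑ w ∈ tF A, p w * (-L d w)) - ∑ A ∈ 𝒜, (∑ w ∈ tF A, p w) * G A)
            + ((∑ A ∈ 𝒜, (∑ w ∈ tF A, p w) * G A) - ∑ A ∈ 𝒜, G A * Q A)| := by rw [sub_add_sub_cancel]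
      _ ≤ _ + _ := abs_add_le _ _
      _ ≤ ε * R + δ * ((1 + 2*ε) * R) := add_le_add s2 s3
      _ = (ε + δ * (1 + 2*ε)) * R := by ring
  -- main argument
  intro d hd
  simp only [Set.mem_iInter, Set.mem_setOf_eq]
  intro η hη e
  obtain ⟨Q, hQmem, hQineq⟩ := hd e
  obtain ⟨pstar, hpext, hpclose⟩ := hMsim2 Q hQmem
  have hpcl : pstar ∈ closure (convexHull ℝ ℳ) := extremePoints_subset hpext
  -- pstar is a probability vector
  have hT : ∀ q ∈ closure (convexHull ℝ ℳ), (∀ w, 0 ≤ q w) ∧ ∑ w, q w = 1 := by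
    have hconv : Convex ℝ {q : Ω → ℝ | (∀ w, 0 ≤ q w) ∧ ∑ w, q w = 1} := by
      intro x hx y hy a b ha hb hab
      refine ⟨fun w => ?_, ?_⟩
      · have : (a • x + b • y) w = a * x w + b * y w := rfl
        rw [this]
        exact add_nonneg (mul_nonneg ha (hx.1 w)) (mul_nonneg hb (hy.1 w))
      · have : ∑ w, (a • x + b • y) w = ∑ w, (a * x w + b * y w) := rfl
        rw [this, Finset.sum_add_distrib, ← Finset.mul_sum, ← Finset.mul_sum, hx.2, hy.2,
          mul_one, mul_one]
        exact hab
    have hcl : IsClosed {q : Ω → ℝ | (∀ w, 0 ≤ q w) ∧ ∑ w, q w = 1} := by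
      rw [Set.setOf_and]
      refine IsClosed.inter ?_ ?_
      · rw [Set.setOf_forall]
        exact isClosed_iInter fun w => isClosed_le continuous_const (continuous_apply w)
      · exact isClosed_eq (continuous_finset_sum _ fun w _ => continuous_apply w) continuous_const
    exact fun q hq => closure_minimal (convexHull_min (fun p hp => hℳ p hp) hconv) hcl hq
  obtain ⟨hp0, hp1⟩ := hT pstar hpcl
  have hpclose' : ∑ A ∈ 𝒜, |(∑ w ∈ tF A, pstar w) - Q A| ≤ δ := by
    refine le_trans (le_of_eq ?_) hpclose
    exact Finset.sum_congr rfl fun A _ => by rw [hind A pstar]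
  have k_e := abs_le.mp (key e pstar hp0 hp1 Q (hℳhat Q hQmem).2 hpclose')
  have k_d := abs_le.mp (key d pstar hp0 hp1 Q (hℳhat Q hQmem).2 hpclose')
  have hRhat : Finset.univ.sup' Finset.univ_nonempty
      (fun d' : D => 𝒜.sup' h𝒜 (fun A => -(Lhat d' A)) - 𝒜.inf' h𝒜 (fun A => -(Lhat d' A)))
      ≤ (1 + 2*ε) * R := Finset.sup'_le _ _ fun d' _ => hRhatd d'
  have hγR := mul_le_mul_of_nonneg_left hRhat hγ
  have hgval : (∑ w, pstar w * (-L e w)) - (∑ w, pstar w * (-L d w))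
      ≤ (γ * (1 + 2*ε) + 2 * (ε + δ * (1 + 2*ε))) * R := by
    have hring : (γ * (1 + 2*ε) + 2 * (ε + δ * (1 + 2*ε))) * R
        = γ * ((1 + 2*ε) * R) + 2 * ((ε + δ * (1 + 2*ε)) * R) := by ring
    rw [hring]
    linarith [k_e.1, k_d.2, hQineq, hγR]
  -- pass from closure of convex hull to ℳ
  by_contra hcon
  push_neg at hcon
  set c : Ω → ℝ := fun w => (-L e w) - (-L d w) with hcdef
  have hφ : ∀ q : Ω → ℝ, dotLin c q = (∑ w, q w * (-L e w)) - (∑ w, q w * (-L d w)) := by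
    intro q
    simp only [dotLin, LinearMap.coe_mk, AddHom.coe_mk, hcdef]
    rw [← Finset.sum_sub_distrib]
    exact Finset.sum_congr rfl fun w _ => by ring
  set T := (η + γ * (1 + 2 * ε) + 2 * (ε + δ * (1 + 2 * ε))) * R with hTdef
  have hsub : ℳ ⊆ {q | T ≤ dotLin c q} := by
    intro p hp
    rw [Set.mem_setOf_eq, hφ]
    exact (hcon p hp).le
  have hconvS : Convex ℝ {q : Ω → ℝ | T ≤ dotLin c q} :=
    convex_halfSpace_ge (dotLin c).isLinear T
  have hclS : IsClosed {q : Ω → ℝ | T ≤ dotLin c q} :=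
    isClosed_le continuous_const (dotLin c).continuous_of_finiteDimensional
  have hTle := closure_minimal (convexHull_min hsub hconvS) hclS hpcl
  rw [Set.mem_setOf_eq, hφ] at hTle
  have hηR : 0 < η * R := mul_pos hη hR
  have hTeq : T = η * R + (γ * (1 + 2*ε) + 2 * (ε + δ * (1 + 2*ε))) * R := by
    rw [hTdef]; ring
  linarith [hgval]
end

section
/- Let Ω be a nonempty finite set, D a nonempty set, L : D × Ω → ℝ a loss function with f_d = −L(d,·), and ℳ a nonempty set of probability vectors on Ω. Then max(Ω,D,ℳ,L) = max(Ω,D,convexHull(ℳ),L), where the convex hull is taken in ℝ^Ω; that is, a decision d is undominated relative to ℳ if and only if it is undominated relative to the convex hull of ℳ. -/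
/-- The set of maximal (undominated) decisions `max(Ω,D,ℳ,L)`. -/
def maxSet0 {Ω D : Type*} [Fintype Ω] (ℳ : Set (Ω → ℝ)) (L : D → Ω → ℝ) : Set D :=
  {d : D | ∀ e : D, ∃ p ∈ ℳ, expUtil p L e ≤ expUtil p L d}

/-- Maximality is unchanged when passing to the convex hull of the credal set:
`max(Ω,D,ℳ,L) = max(Ω,D,cohull(ℳ),L)`. -/
theorem stmt_13 {Ω : Type*} [Fintype Ω] [Nonempty Ω]
    {D : Type*} [Nonempty D]
    (L : D → Ω → ℝ)
    (ℳ : Set (Ω → ℝ)) (hℳne : ℳ.Nonempty)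
    (hℳ : ∀ p ∈ ℳ, (∀ w, 0 ≤ p w) ∧ ∑ w, p w = 1) :
    maxSet0 ℳ L = maxSet0 (convexHull ℝ ℳ) L := by
  ext d
  constructor
  · intro hd e
    obtain ⟨p, hp, hle⟩ := hd e
    exact ⟨p, subset_convexHull ℝ ℳ hp, hle⟩
  · intro hd e
    obtain ⟨p, hp, hle⟩ := hd e
    by_contra hcon
    push_neg at hcon
    have hlin : IsLinearMap ℝ (fun q : Ω → ℝ =>
        expUtil q L d - expUtil q L e) := by
      constructor
      · intro x y
        simp only [expUtil, Pi.add_apply, add_mul, Finset.sum_add_distrib]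
        ring
      · intro c x
        simp only [expUtil, Pi.smul_apply, smul_eq_mul, mul_assoc, ← Finset.mul_sum]
        ring
    have hconv : Convex ℝ {q : Ω → ℝ | (fun q => expUtil q L d - expUtil q L e) q < 0} :=
      convex_halfSpace_lt hlin 0
    have hsub : convexHull ℝ ℳ ⊆ {q : Ω → ℝ | expUtil q L d - expUtil q L e < 0} := by
      apply convexHull_min _ hconv
      intro q hq
      have := hcon q hq
      simpa using sub_neg.mpr this
    have := hsub hp
    simp only [Set.mem_setOf_eq, sub_neg] at this
    exact absurd hle (not_le.mpr this)
end

section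
/- Let Ω be a nonempty finite set, D a finite nonempty set, L : D × Ω → ℝ with f_d = −L(d,·) and R_D = max_{d∈D}(max_w f_d(w) − min_w f_d(w)) > 0, and ℳ a nonempty set of probability vectors on Ω. Suppose ε > 0 and max^ε(Ω,D,ℳ,L) = max^δ(Ω,D,ℳ,L) for every δ > ε. Then max^ε(Ω,D,ℳ,L) = max^ε(Ω,D,closure(ℳ),L), where the closure is taken in ℝ^Ω. -/
/-- If `max^ε(Ω,D,ℳ,L) = max^δ(Ω,D,ℳ,L)` for every `δ > ε > 0`, then
`max^ε(Ω,D,ℳ,L) = max^ε(Ω,D,closure(ℳ),L)`. -/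
theorem stmt_14 {Ω : Type*} [Fintype Ω] [Nonempty Ω]
    {D : Type*} [Fintype D] [Nonempty D]
    (L : D → Ω → ℝ) (hR : 0 < lossRange L)
    (ℳ : Set (Ω → ℝ)) (hℳne : ℳ.Nonempty)
    (hℳ : ∀ p ∈ ℳ, (∀ w, 0 ≤ p w) ∧ ∑ w, p w = 1)
    (ε : ℝ) (hε : 0 < ε)
    (hstab : ∀ δ : ℝ, ε < δ → maxSet ε ℳ L = maxSet δ ℳ L) :
    maxSet ε ℳ L = maxSet ε (closure ℳ) L := by
  apply Set.Subset.antisymm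
  · intro d hd e
    obtain ⟨p, hp, h⟩ := hd e
    exact ⟨p, subset_closure hp, h⟩
  · intro d hd
    rw [hstab (ε + 1) (by linarith)]
    intro e
    obtain ⟨p, hp, h⟩ := hd e
    have hg : Continuous (fun q : Ω → ℝ => expUtil q L e - expUtil q L d) := by
      unfold expUtil
      fun_prop
    have hU : IsOpen {q : Ω → ℝ | expUtil q L e - expUtil q L d < (ε + 1) * lossRange L} :=
      isOpen_lt hg continuous_const
    have hpU : p ∈ {q : Ω → ℝ | expUtil q L e - expUtil q L d < (ε + 1) * lossRange L} := by
      simp only [Set.mem_setOf_eq]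
      nlinarith
    obtain ⟨q, hq1, hq2⟩ := mem_closure_iff_nhds.mp hp _ (hU.mem_nhds hpU)
    exact ⟨q, hq2, le_of_lt hq1⟩
end

section
/- Let Ω be a nonempty finite set, D a finite nonempty set, L : D × Ω → ℝ with f_d = −L(d,·) and R_D = max_{d∈D}(max_w f_d(w) − min_w f_d(w)) > 0, and ℳ a nonempty set of probability vectors on Ω. Then opt(Ω,D,closure(ℳ),L) = ⋂_{ε>0} opt^ε(Ω,D,ℳ,L), where opt denotes opt^0 and the closure is taken in ℝ^Ω with the standard topology. -/
/-- `opt(Ω,D,closure(ℳ),L) = ⋂_{ε>0} opt^ε(Ω,D,ℳ,L)`, where `opt = opt^0`. -/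
theorem stmt_15 {Ω : Type*} [Fintype Ω] [Nonempty Ω]
    {D : Type*} [Fintype D] [Nonempty D]
    (L : D → Ω → ℝ) (hR : 0 < lossRange L)
    (ℳ : Set (Ω → ℝ)) (hℳne : ℳ.Nonempty)
    (hℳ : ∀ p ∈ ℳ, (∀ w, 0 ≤ p w) ∧ ∑ w, p w = 1) :
    optSet 0 (closure ℳ) L = ⋂ (ε : ℝ) (_ : 0 < ε), optSet ε ℳ L := by
  -- continuity of expUtil
  have hcont : ∀ e : D, Continuous fun p : Ω → ℝ => expUtil p L e := by
    intro e
    exact continuous_finset_sum _ fun w _ => (continuous_apply w).mul continuous_const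
  have hg : ∀ d : D, Continuous fun p : Ω → ℝ =>
      Finset.univ.sup' Finset.univ_nonempty (fun e : D => expUtil p L e) - expUtil p L d := by
    intro d
    exact (Continuous.finset_sup'_apply Finset.univ_nonempty (fun e _ => hcont e)).sub (hcont d)
  ext d
  simp only [Set.mem_iInter]
  constructor
  · rintro ⟨p, hp, hopt⟩ ε hε
    -- U is open nbhd of p, meets ℳ
    have hU : IsOpen {q : Ω → ℝ |
        Finset.univ.sup' Finset.univ_nonempty (fun e : D => expUtil q L e) - expUtil q L d
          < ε * lossRange L} := isOpen_lt (hg d) continuous_const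
    have hpU : p ∈ {q : Ω → ℝ |
        Finset.univ.sup' Finset.univ_nonempty (fun e : D => expUtil q L e) - expUtil q L d
          < ε * lossRange L} := by
      have h1 : Finset.univ.sup' Finset.univ_nonempty (fun e : D => expUtil p L e)
          - expUtil p L d ≤ 0 := by
        rw [sub_nonpos, Finset.sup'_le_iff]
        intro e _
        have := hopt e
        linarith
      have : (0:ℝ) < ε * lossRange L := mul_pos hε hR
      exact lt_of_le_of_lt h1 this
    rcases mem_closure_iff.mp hp _ hU hpU with ⟨q, hqU, hqM⟩
    refine ⟨q, hqM, fun e => ?_⟩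
    have h2 := Finset.le_sup' (fun e : D => expUtil q L e) (Finset.mem_univ e)
    have := hqU
    simp only [Set.mem_setOf_eq] at this
    linarith
  · intro h
    -- compactness of closure ℳ
    set g : (Ω → ℝ) → ℝ := fun p =>
      Finset.univ.sup' Finset.univ_nonempty (fun e : D => expUtil p L e) - expUtil p L d with hgdef
    have hSsub : ℳ ⊆ Set.pi Set.univ (fun _ : Ω => Set.Icc (0:ℝ) 1) := by
      intro p hp w _
      obtain ⟨hpos, hsum⟩ := hℳ p hp
      refine ⟨hpos w, ?_⟩
      calc p w ≤ ∑ v, p v := Finset.single_le_sum (fun v _ => hpos v) (Finset.mem_univ w)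
        _ = 1 := hsum
    have hKcomp : IsCompact (closure ℳ) := by
      have : IsCompact (Set.pi Set.univ (fun _ : Ω => Set.Icc (0:ℝ) 1)) :=
        isCompact_univ_pi fun _ => isCompact_Icc
      exact this.of_isClosed_subset isClosed_closure
        ((closure_minimal hSsub (this.isClosed)))
    have hKne : (closure ℳ).Nonempty := hℳne.closure
    obtain ⟨p₀, hp₀K, hp₀min⟩ := hKcomp.exists_isMinOn hKne ((hg d).continuousOn)
    refine ⟨p₀, hp₀K, fun e => ?_⟩
    have hgle : g p₀ ≤ 0 := by
      by_contra hpos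
      push_neg at hpos
      set ε := g p₀ / (2 * lossRange L) with hεdef
      have hε : 0 < ε := div_pos hpos (by linarith)
      clear_value ε
      clear_value g
      rcases h ε hε with ⟨q, hqM, hq⟩
      have hgq : g p₀ ≤ g q := by
        have := hp₀min (subset_closure hqM)
        simpa [hgdef] using this
      have hgq2 : g q ≤ ε * lossRange L := by
        rw [hgdef]
        simp only [sub_le_iff_le_add']
        rw [Finset.sup'_le_iff]
        intro e' _
        have := hq e'
        linarith
      have : ε * lossRange L = g p₀ / 2 := by
        field_simp [hεdef]
        rw [hεdef, div_mul_eq_mul_div, div_mul_eq_mul_div, div_eq_iff (mul_pos two_pos hR).ne']; ring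
      rw [this] at hgq2
      have : g p₀ ≤ g p₀ / 2 := le_trans hgq hgq2
      linarith
    have h2 := Finset.le_sup' (fun e : D => expUtil p₀ L e) (Finset.mem_univ e)
    rw [hgdef] at hgle
    simp only at hgle
    simp only [zero_mul]
    linarith
end
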